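/- arXiv:1303.5617 — 4 statements merged into one kernel-verified Lean document; each statement's English description precedes it below -/
import Mathlib

section
/- Let B be a set of positive integers, and for each b in B let Ω_b be a subset of {0,1,...,b-1}. For b in B let S_b = {n ∈ ℕ : n mod b ∈ Ω_b}, and assume S_b(x) ≤ c_b·x for all x ≥ 0, where the positive constants c_b satisfy ∑_{b∈B} c_b < ∞. Then the set of positive integers n such that n mod b ∉ Ω_b for all b ∈ B possesses an asymptotic density. -/
open Filter Topology ArithmeticFunction

/-- Number of elements of `A` in `[1, N]`. -/
noncomputable def cnt (A : Set ℕ) (N : ℕ) : ℕ := (A ∩ Set.Icc 1 N).ncard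

/-- `A ⊆ ℕ` has asymptotic density `d`. -/
def HasDensity (A : Set ℕ) (d : ℝ) : Prop :=
  Filter.Tendsto (fun N : ℕ => (cnt A N : ℝ) / N) Filter.atTop (nhds d)

/-- `A` is thin: the sum of the reciprocals of its elements converges. -/
def Thin (A : Set ℕ) : Prop := Summable (fun a : A => (1 : ℝ) / a)

lemma cnt_eq_card (P : ℕ → Prop) [DecidablePred P] (N : ℕ) :
    cnt {n | P n} N = ((Finset.Icc 1 N).filter P).card := by
  rw [cnt, ← Set.ncard_coe_finset]
  congr 1
  ext n
  simp only [Set.mem_inter_iff, Set.mem_setOf_eq, Set.mem_Icc, Finset.coe_filter,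
    Finset.mem_Icc]
  tauto

lemma periodic_density (L : ℕ) (hL : 0 < L) (Q : ℕ → Prop) [DecidablePred Q]
    (hQ : ∀ n, Q (n + L) ↔ Q n) :
    Filter.Tendsto (fun N : ℕ => (((Finset.Icc 1 N).filter Q).card : ℝ) / N) Filter.atTop
      (nhds ((((Finset.Icc 1 L).filter Q).card : ℝ) / L)) := by
  set m := ((Finset.Icc 1 L).filter Q).card with hm
  have hblock : ∀ k : ℕ, ((Finset.Ioc (k*L) ((k+1)*L)).filter Q).card = m := by
    intro k
    induction k with
    | zero =>
      rw [show 0*L = 0 by ring, show (0+1)*L = L by ring, ← Finset.Icc_add_one_left_eq_Ioc, zero_add]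
    | succ k ih =>
      have himg : Finset.Ioc ((k+1)*L) ((k+1+1)*L)
          = Finset.image (fun x => L + x) (Finset.Ioc (k*L) ((k+1)*L)) := by
        rw [Finset.image_add_left_Ioc]
        congr 1 <;> ring
      rw [himg, Finset.filter_image]
      have heq : (Finset.Ioc (k*L) ((k+1)*L)).filter (fun x => Q (L + x))
          = (Finset.Ioc (k*L) ((k+1)*L)).filter Q := by
        apply Finset.filter_congr
        intro x _
        rw [add_comm]
        exact hQ x
      rw [heq, Finset.card_image_of_injective _ (add_right_injective L)]
      exact ih
  have hmul : ∀ k : ℕ, ((Finset.Ioc 0 (k*L)).filter Q).card = k * m := by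
    intro k
    induction k with
    | zero => simp
    | succ k ih =>
      have hsplit : Finset.Ioc 0 ((k+1)*L)
          = Finset.Ioc 0 (k*L) ∪ Finset.Ioc (k*L) ((k+1)*L) :=
        (Finset.Ioc_union_Ioc_eq_Ioc (Nat.zero_le _) (by nlinarith)).symm
      have hdisj : Disjoint ((Finset.Ioc 0 (k*L)).filter Q)
          ((Finset.Ioc (k*L) ((k+1)*L)).filter Q) := by
        apply Finset.disjoint_filter_filter
        rw [Finset.disjoint_left]
        intro a ha hb
        simp only [Finset.mem_Ioc] at ha hb
        omega
      rw [hsplit, Finset.filter_union, Finset.card_union_of_disjoint hdisj, ih, hblock k]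
      ring
  have hbound : ∀ N : ℕ, (N/L) * m ≤ ((Finset.Icc 1 N).filter Q).card ∧
      ((Finset.Icc 1 N).filter Q).card ≤ (N/L)*m + L := by
    intro N
    have hIcc : Finset.Icc 1 N = Finset.Ioc 0 N := Finset.Icc_add_one_left_eq_Ioc (a := 0) (b := N)
    have h1 : Finset.Ioc 0 N = Finset.Ioc 0 ((N/L)*L) ∪ Finset.Ioc ((N/L)*L) N :=
      (Finset.Ioc_union_Ioc_eq_Ioc (Nat.zero_le _) (Nat.div_mul_le_self N L)).symm
    have hdisj : Disjoint ((Finset.Ioc 0 ((N/L)*L)).filter Q)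
        ((Finset.Ioc ((N/L)*L) N).filter Q) := by
      apply Finset.disjoint_filter_filter
      rw [Finset.disjoint_left]
      intro a ha hb
      simp only [Finset.mem_Ioc] at ha hb
      omega
    have hcard : ((Finset.Icc 1 N).filter Q).card
        = (N/L) * m + ((Finset.Ioc ((N/L)*L) N).filter Q).card := by
      rw [hIcc, h1, Finset.filter_union, Finset.card_union_of_disjoint hdisj, hmul (N/L)]
    constructor
    · rw [hcard]; exact Nat.le_add_right _ _
    · have hle : ((Finset.Ioc ((N/L)*L) N).filter Q).card ≤ L := by
        refine le_trans (Finset.card_filter_le _ _) ?_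
        rw [Nat.card_Ioc]
        have h2 := Nat.mod_lt N hL
        have h3 := Nat.div_add_mod N L
        have h4 : N/L*L = L*(N/L) := Nat.mul_comm _ _
        omega
      rw [hcard]
      exact Nat.add_le_add_left hle _
  have hmle : m ≤ L := by
    refine le_trans (Finset.card_filter_le _ _) ?_
    simp [Nat.card_Icc]
  have hLpos : (0:ℝ) < L := by exact_mod_cast hL
  have hL0 : (L:ℝ) ≠ 0 := ne_of_gt hLpos
  apply tendsto_of_tendsto_of_tendsto_of_le_of_le'
    (g := fun N : ℕ => (m:ℝ)/L - (2*L)/N) (h := fun N : ℕ => (m:ℝ)/L + (2*L)/N)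
  · simpa using tendsto_const_nhds.sub (tendsto_const_div_atTop_nhds_zero_nat (2*(L:ℝ)))
  · simpa using tendsto_const_nhds.add (tendsto_const_div_atTop_nhds_zero_nat (2*(L:ℝ)))
  · filter_upwards [eventually_ge_atTop 1] with N hN
    have hNpos : (0:ℝ) < N := by exact_mod_cast hN
    have hN0 : (N:ℝ) ≠ 0 := ne_of_gt hNpos
    obtain ⟨hlo, hhi⟩ := hbound N
    have hlo' : ((N/L : ℕ):ℝ) * m ≤ ((Finset.Icc 1 N).filter Q).card := by exact_mod_cast hlo
    have hq1 : ((N/L : ℕ):ℝ) * L ≤ N := by exact_mod_cast Nat.div_mul_le_self N L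
    have hq2 : (N:ℝ) < ((N/L : ℕ):ℝ) * L + L := by
      have h1 : (L:ℝ) * ((N/L : ℕ):ℝ) + ((N % L : ℕ):ℝ) = N := by
        exact_mod_cast Nat.div_add_mod N L
      have h2 : ((N % L : ℕ):ℝ) < L := by exact_mod_cast Nat.mod_lt N hL
      have h3 : (L:ℝ) * ((N/L : ℕ):ℝ) = ((N/L : ℕ):ℝ) * L := mul_comm _ _
      linarith
    have hmle' : (m:ℝ) ≤ L := by exact_mod_cast hmle
    have hm0 : (0:ℝ) ≤ (m:ℝ) := by positivity
    have hq0 : (0:ℝ) ≤ ((N/L : ℕ):ℝ) := by positivity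
    have hmain : (m:ℝ) * N - 2*L*L ≤ (((Finset.Icc 1 N).filter Q).card : ℝ) * L := by
      nlinarith
    calc (m:ℝ)/L - 2*L/N = ((m:ℝ)*N - 2*L*L)/(L*N) := by field_simp <;> ring
      _ ≤ ((((Finset.Icc 1 N).filter Q).card : ℝ) * L)/(L*N) := by gcongr
      _ = (((Finset.Icc 1 N).filter Q).card : ℝ)/N := by field_simp <;> ring
  · filter_upwards [eventually_ge_atTop 1] with N hN
    have hNpos : (0:ℝ) < N := by exact_mod_cast hN
    have hN0 : (N:ℝ) ≠ 0 := ne_of_gt hNpos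
    obtain ⟨hlo, hhi⟩ := hbound N
    have hhi' : (((Finset.Icc 1 N).filter Q).card : ℝ) ≤ ((N/L : ℕ):ℝ) * m + L := by
      exact_mod_cast hhi
    have hq1 : ((N/L : ℕ):ℝ) * L ≤ N := by exact_mod_cast Nat.div_mul_le_self N L
    have hmle' : (m:ℝ) ≤ L := by exact_mod_cast hmle
    have hm0 : (0:ℝ) ≤ (m:ℝ) := by positivity
    have hq0 : (0:ℝ) ≤ ((N/L : ℕ):ℝ) := by positivity
    have hmain : (((Finset.Icc 1 N).filter Q).card : ℝ) * L ≤ (m:ℝ)*N + 2*L*L := by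
      nlinarith
    calc (((Finset.Icc 1 N).filter Q).card : ℝ)/N
        = ((((Finset.Icc 1 N).filter Q).card : ℝ) * L)/(L*N) := by field_simp <;> ring
      _ ≤ ((m:ℝ)*N + 2*L*L)/(L*N) := by gcongr
      _ = (m:ℝ)/L + 2*L/N := by field_simp <;> ring

theorem sieved_set_has_density
    (B : Set ℕ) (hBpos : ∀ b ∈ B, 0 < b)
    (Om : ℕ → Set ℕ) (hOm : ∀ b ∈ B, Om b ⊆ Set.Iio b)
    (c : ℕ → ℝ) (hcpos : ∀ b ∈ B, 0 < c b)
    (hcount : ∀ b ∈ B, ∀ N : ℕ, (cnt {n : ℕ | n % b ∈ Om b} N : ℝ) ≤ c b * N)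
    (hsum : Summable (fun b : B => c b)) :
    ∃ d : ℝ, HasDensity {n : ℕ | 0 < n ∧ ∀ b ∈ B, n % b ∉ Om b} d := by
  classical
  have hsum' : Summable (Set.indicator B c) := by
    rw [← summable_subtype_iff_indicator]
    exact hsum
  set A : Set ℕ := {n : ℕ | 0 < n ∧ ∀ b ∈ B, n % b ∉ Om b} with hA
  have key : CauchySeq (fun N : ℕ => (cnt A N : ℝ) / N) := by
    rw [Metric.cauchySeq_iff']
    intro ε hε
    have hε4 : 0 < ε/4 := by positivity
    obtain ⟨s, hs⟩ := summable_iff_vanishing.mp hsum' (Set.Iio (ε/4)) (Iio_mem_nhds hε4)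
    set F : Finset ℕ := s.filter (· ∈ B) with hF
    have hFB : ∀ b ∈ F, b ∈ B := fun b hb => (Finset.mem_filter.mp hb).2
    set Q : ℕ → Prop := fun n => ∀ b ∈ F, n % b ∉ Om b with hQdef
    set L : ℕ := ∏ b ∈ F, b with hLdef
    have hL : 0 < L := Finset.prod_pos (fun b hb => hBpos b (hFB b hb))
    have hQper : ∀ n, Q (n + L) ↔ Q n := by
      intro n
      have hmod : ∀ b ∈ F, (n + L) % b = n % b := by
        intro b hb
        obtain ⟨k, hk⟩ := Finset.dvd_prod_of_mem (fun x => x) hb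
        rw [hLdef]
        rw [show (∏ b ∈ F, b) = b * k from hk, Nat.add_mul_mod_self_left]
      exact forall₂_congr fun b hb => by rw [hmod b hb]
    have htend := periodic_density L hL Q hQper
    rw [Metric.tendsto_atTop] at htend
    obtain ⟨M, hM⟩ := htend (ε/4) hε4
    have hcomp : ∀ N : ℕ, (cnt A N : ℝ) ≤ (((Finset.Icc 1 N).filter Q).card : ℝ) ∧
        ((((Finset.Icc 1 N).filter Q).card : ℝ)) ≤ (cnt A N : ℝ) + ε/4 * N := by
      intro N
      have hcntA : (cnt A N) = ((Finset.Icc 1 N).filter (fun n => ∀ b ∈ B, n % b ∉ Om b)).card := by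
        rw [hA, cnt_eq_card]
        congr 1
        apply Finset.filter_congr
        intro x hx
        simp only [Finset.mem_Icc] at hx
        have hx1 : 0 < x := hx.1
        tauto
      set Bad := ((Finset.Icc 1 N).filter Q).filter (fun n => ¬ ∀ b ∈ B, n % b ∉ Om b) with hBadDef
      have hsplitcard : ((Finset.Icc 1 N).filter Q).card
          = ((Finset.Icc 1 N).filter (fun n => ∀ b ∈ B, n % b ∉ Om b)).card + Bad.card := by
        have h1 := Finset.card_filter_add_card_filter_not
          (s := (Finset.Icc 1 N).filter Q) (fun n => ∀ b ∈ B, n % b ∉ Om b)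
        have h2 : ((Finset.Icc 1 N).filter Q).filter (fun n => ∀ b ∈ B, n % b ∉ Om b)
            = (Finset.Icc 1 N).filter (fun n => ∀ b ∈ B, n % b ∉ Om b) := by
          rw [Finset.filter_filter]
          apply Finset.filter_congr
          intro x _
          constructor
          · exact fun h => h.2
          · intro h; exact ⟨fun b hb => h b (hFB b hb), h⟩
        rw [h2] at h1
        have h3 : (((Finset.Icc 1 N).filter Q).filter (fun a => ¬ ∀ b ∈ B, a % b ∉ Om b)).card
            = Bad.card := rfl
        omega
      have hwit : ∀ n ∈ Bad, ∃ b, (b ∈ B ∧ b ∉ F) ∧ n % b ∈ Om b := by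
        intro n hn
        simp only [hBadDef, Finset.mem_filter] at hn
        obtain ⟨⟨hnIcc, hnQ⟩, hnall⟩ := hn
        push_neg at hnall
        obtain ⟨b, hbB, hbOm⟩ := hnall
        exact ⟨b, ⟨hbB, fun hbF => hnQ b hbF hbOm⟩, hbOm⟩
      choose! w hw using hwit
      set t : Finset ℕ := Bad.image w with ht
      have htB : ∀ b ∈ t, b ∈ B ∧ b ∉ F := by
        intro b hb
        obtain ⟨n, hn, rfl⟩ := Finset.mem_image.mp hb
        exact (hw n hn).1
      have hdisj : Disjoint t s := by
        rw [Finset.disjoint_left]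
        intro b hb hbs
        exact (htB b hb).2 (Finset.mem_filter.mpr ⟨hbs, (htB b hb).1⟩)
      have htsum : ∑ b ∈ t, c b < ε/4 := by
        have hmem := hs t hdisj
        have heq : ∑ b ∈ t, Set.indicator B c b = ∑ b ∈ t, c b :=
          Finset.sum_congr rfl (fun b hb => Set.indicator_of_mem (htB b hb).1 c)
        rw [heq] at hmem
        exact hmem
      have hBadsub : Bad ⊆ t.biUnion (fun b => (Finset.Icc 1 N).filter (fun n => n % b ∈ Om b)) := by
        intro n hn
        refine Finset.mem_biUnion.mpr ⟨w n, Finset.mem_image_of_mem w hn, ?_⟩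
        refine Finset.mem_filter.mpr ⟨?_, (hw n hn).2⟩
        exact Finset.mem_of_mem_filter n (Finset.mem_of_mem_filter n hn)
      have hBadcard : (Bad.card : ℝ) ≤ ε/4 * N := by
        have h1 : Bad.card ≤ ∑ b ∈ t, ((Finset.Icc 1 N).filter (fun n => n % b ∈ Om b)).card :=
          le_trans (Finset.card_le_card hBadsub) Finset.card_biUnion_le
        have h2 : ((Bad.card : ℝ)) ≤ ∑ b ∈ t, (((Finset.Icc 1 N).filter (fun n => n % b ∈ Om b)).card : ℝ) := by
          exact_mod_cast h1
        have h3 : ∀ b ∈ t, (((Finset.Icc 1 N).filter (fun n => n % b ∈ Om b)).card : ℝ) ≤ c b * N := by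
          intro b hb
          have hc := hcount b (htB b hb).1 N
          rwa [cnt_eq_card] at hc
        calc (Bad.card : ℝ) ≤ ∑ b ∈ t, c b * N := le_trans h2 (Finset.sum_le_sum h3)
          _ = (∑ b ∈ t, c b) * N := by rw [Finset.sum_mul]
          _ ≤ ε/4 * N := mul_le_mul_of_nonneg_right htsum.le (Nat.cast_nonneg N)
      constructor
      · rw [hcntA]
        exact_mod_cast Nat.le.intro hsplitcard.symm
      · have heq2 : (((Finset.Icc 1 N).filter Q).card : ℝ) = (cnt A N : ℝ) + (Bad.card : ℝ) := by
          rw [hcntA]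
          exact_mod_cast hsplitcard
        linarith
    have hdist : ∀ N : ℕ, 1 ≤ N →
        dist ((cnt A N : ℝ)/N) ((((Finset.Icc 1 N).filter Q).card : ℝ)/N) ≤ ε/4 := by
      intro N hN
      have hNpos : (0:ℝ) < N := by exact_mod_cast hN
      obtain ⟨h1, h2⟩ := hcomp N
      rw [Real.dist_eq, abs_sub_comm, abs_of_nonneg (by
        rw [div_sub_div_same]
        exact div_nonneg (by linarith) hNpos.le)]
      rw [div_sub_div_same, div_le_iff₀ hNpos]
      linarith
    refine ⟨max M 1, fun n hn => ?_⟩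
    have hn1 : 1 ≤ n := le_trans (le_max_right M 1) hn
    have hnM : M ≤ n := le_trans (le_max_left M 1) hn
    have d1 := hdist n hn1
    have d2 := hM n hnM
    have d3 := hM (max M 1) (le_max_left M 1)
    have d4 : dist ((((Finset.Icc 1 (max M 1)).filter Q).card : ℝ)/((max M 1 : ℕ):ℝ))
        ((cnt A (max M 1) : ℝ)/((max M 1 : ℕ):ℝ)) ≤ ε/4 := by
      rw [dist_comm]
      exact hdist (max M 1) (le_max_right M 1)
    have dmid : dist ((((Finset.Icc 1 n).filter Q).card : ℝ)/n)
        ((((Finset.Icc 1 (max M 1)).filter Q).card : ℝ)/((max M 1 : ℕ):ℝ))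
        < ε/4 + ε/4 :=
      lt_of_le_of_lt (dist_triangle_right _ _ _) (add_lt_add d2 d3)
    have htri := dist_triangle4 ((cnt A n : ℝ)/n)
      ((((Finset.Icc 1 n).filter Q).card : ℝ)/n)
      ((((Finset.Icc 1 (max M 1)).filter Q).card : ℝ)/((max M 1 : ℕ):ℝ))
      ((cnt A (max M 1) : ℝ)/((max M 1 : ℕ):ℝ))
    show dist ((cnt A n : ℝ)/n) ((cnt A (max M 1) : ℝ)/((max M 1 : ℕ):ℝ)) < ε
    linarith
  obtain ⟨d, hd⟩ := cauchySeq_tendsto_of_complete key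
  exact ⟨d, hd⟩
end

section
/- If A is a thin set of positive integers (i.e., ∑_{a∈A} 1/a < ∞), then the set of multiples M(A) = {an : a ∈ A, n ∈ ℕ} has an asymptotic density. Moreover, if 1 ∉ A, then the asymptotic density of M(A) is strictly less than 1. -/
open Filter Topology ArithmeticFunction

attribute [local instance] Classical.propDecidable

/-- Count of `m ∈ [1, N]` satisfying `p`. -/
noncomputable def pcnt (p : ℕ → Prop) (N : ℕ) : ℕ :=
  ((Finset.Icc 1 N).filter p).card

lemma cnt_eq_pcnt (A : Set ℕ) (N : ℕ) : cnt A N = pcnt (· ∈ A) N := by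
  have h : A ∩ Set.Icc 1 N = ↑((Finset.Icc 1 N).filter (· ∈ A)) := by
    ext m
    simp only [Set.mem_inter_iff, Set.mem_Icc, Finset.coe_filter, Finset.mem_Icc,
      Set.mem_setOf_eq]
    tauto
  rw [cnt, h, Set.ncard_coe_finset, pcnt]

lemma pcnt_congr {p q : ℕ → Prop} (h : ∀ m, 1 ≤ m → (p m ↔ q m)) (N : ℕ) :
    pcnt p N = pcnt q N := by
  unfold pcnt
  congr 1
  apply Finset.filter_congr
  intro m hm
  simp only [Finset.mem_Icc] at hm
  simpa using h m hm.1

lemma pcnt_mono_pred {p q : ℕ → Prop} (h : ∀ m, p m → q m) (N : ℕ) :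
    pcnt p N ≤ pcnt q N := by
  apply Finset.card_le_card
  intro m hm
  simp only [Finset.mem_filter] at hm ⊢
  exact ⟨hm.1, h m hm.2⟩

lemma pcnt_mono_N {p : ℕ → Prop} {N M : ℕ} (h : N ≤ M) : pcnt p N ≤ pcnt p M := by
  apply Finset.card_le_card
  intro m hm
  simp only [Finset.mem_filter, Finset.mem_Icc] at hm ⊢
  exact ⟨⟨hm.1.1, le_trans hm.1.2 h⟩, hm.2⟩

lemma pcnt_le (p : ℕ → Prop) (N : ℕ) : pcnt p N ≤ N := by
  calc pcnt p N ≤ (Finset.Icc 1 N).card := Finset.card_filter_le _ _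
  _ = N := by rw [Nat.card_Icc]; omega

lemma pcnt_add_pcnt_not (p : ℕ → Prop) (N : ℕ) :
    pcnt p N + pcnt (fun m => ¬ p m) N = N := by
  rw [pcnt, pcnt, Finset.card_filter_add_card_filter_not, Nat.card_Icc]
  omega

lemma pcnt_false {p : ℕ → Prop} (h : ∀ m, ¬ p m) (N : ℕ) : pcnt p N = 0 := by
  rw [pcnt, Finset.card_eq_zero]
  apply Finset.eq_empty_iff_forall_notMem.mpr
  intro m hm
  rw [Finset.mem_filter] at hm
  exact h m hm.2

/-- iterated periodicity -/
lemma periodic_iter {p : ℕ → Prop} {L : ℕ}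
    (hper : ∀ m, 1 ≤ m → (p m ↔ p (m + L))) :
    ∀ c m, 1 ≤ m → (p m ↔ p (m + c * L)) := by
  intro c
  induction c with
  | zero => simp
  | succ c ih =>
    intro m hm
    have h1 := ih m hm
    have h2 := hper (m + c * L) (by omega)
    rw [h1, h2]
    congr! 1
    ring

/-- counting a periodic predicate over whole periods -/
lemma pcnt_periodic {p : ℕ → Prop} {L : ℕ} (hL : 0 < L)
    (hper : ∀ m, 1 ≤ m → (p m ↔ p (m + L))) :
    ∀ c, pcnt p (c * L) = c * pcnt p L := by
  intro c
  induction c with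
  | zero => simp [pcnt]
  | succ c ih =>
    have hsplit : Finset.Icc 1 ((c + 1) * L) =
        Finset.Icc 1 (c * L) ∪ Finset.Ioc (c * L) ((c + 1) * L) := by
      ext x
      simp only [Finset.mem_Icc, Finset.mem_union, Finset.mem_Ioc]
      have h : (c + 1) * L = c * L + L := by ring
      omega
    have hdisj : Disjoint (Finset.Icc 1 (c * L)) (Finset.Ioc (c * L) ((c + 1) * L)) := by
      rw [Finset.disjoint_left]
      intro x hx hx'
      simp only [Finset.mem_Icc] at hx
      simp only [Finset.mem_Ioc] at hx'
      omega
    have hcard : pcnt p L = ((Finset.Ioc (c * L) ((c + 1) * L)).filter p).card := by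
      rw [pcnt]
      apply Finset.card_bij (fun m _ => m + c * L)
      · intro a ha
        simp only [Finset.mem_filter, Finset.mem_Icc] at ha
        simp only [Finset.mem_filter, Finset.mem_Ioc]
        refine ⟨⟨by omega, by nlinarith [ha.1.1, ha.1.2]⟩, ?_⟩
        exact (periodic_iter hper c a ha.1.1).mp ha.2
      · intro a _ b _ hab
        omega
      · intro b hb
        simp only [Finset.mem_filter, Finset.mem_Ioc] at hb
        have hb1 : c * L < b := hb.1.1
        have hb2 : b ≤ c * L + L := by nlinarith [hb.1.2]
        refine ⟨b - c * L, ?_, by omega⟩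
        simp only [Finset.mem_filter, Finset.mem_Icc]
        refine ⟨⟨by omega, by omega⟩, ?_⟩
        apply (periodic_iter hper c (b - c * L) (by omega)).mpr
        have he : b - c * L + c * L = b := by omega
        rw [he]
        exact hb.2
    rw [pcnt, hsplit, Finset.filter_union, Finset.card_union_of_disjoint
      (Finset.disjoint_filter_filter hdisj)]
    rw [← pcnt, ih, ← hcard]
    ring

/-- density of a periodic predicate -/
lemma pcnt_periodic_tendsto {p : ℕ → Prop} {L : ℕ} (hL : 0 < L)
    (hper : ∀ m, 1 ≤ m → (p m ↔ p (m + L))) :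
    Tendsto (fun N : ℕ => (pcnt p N : ℝ) / N) atTop
      (𝓝 ((pcnt p L : ℝ) / L)) := by
  set c := pcnt p L with hc
  have key : ∀ N : ℕ, 1 ≤ N →
      |(pcnt p N : ℝ) / N - (c : ℝ) / L| ≤ 2 * L / N := by
    intro N hN
    set q := N / L with hq
    have hdm := Nat.div_add_mod N L
    have hmlt := Nat.mod_lt N hL
    have hql : q * L = L * (N / L) := by rw [hq]; ring
    have hNlb : q * L ≤ N := by omega
    have hNub : N < (q + 1) * L := by
      have h : (q + 1) * L = q * L + L := by ring
      omega
    have hlb : q * c ≤ pcnt p N := by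
      rw [hc, ← pcnt_periodic hL hper q]; exact pcnt_mono_N hNlb
    have hub : pcnt p N ≤ (q + 1) * c := by
      rw [hc, ← pcnt_periodic hL hper (q + 1)]; exact pcnt_mono_N (le_of_lt hNub)
    have hcL : c ≤ L := pcnt_le p L
    have hNpos : (0 : ℝ) < N := by exact_mod_cast hN
    have hLpos : (0 : ℝ) < L := by exact_mod_cast hL
    -- cast everything
    have hlbR : (q : ℝ) * c ≤ (pcnt p N : ℝ) := by exact_mod_cast hlb
    have hubR : (pcnt p N : ℝ) ≤ ((q : ℝ) + 1) * c := by exact_mod_cast hub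
    have hNlbR : (q : ℝ) * L ≤ (N : ℝ) := by exact_mod_cast hNlb
    have hNubR : (N : ℝ) < ((q : ℝ) + 1) * L := by exact_mod_cast hNub
    have hcLR : (c : ℝ) ≤ (L : ℝ) := by exact_mod_cast hcL
    have hcnn : (0 : ℝ) ≤ (c : ℝ) := Nat.cast_nonneg c
    have hA : (pcnt p N : ℝ) * L - (N : ℝ) * c ≤ (L : ℝ) * L := by
      nlinarith [mul_le_mul_of_nonneg_right hubR hLpos.le,
        mul_le_mul_of_nonneg_right hNlbR hcnn,
        mul_le_mul_of_nonneg_right hcLR hLpos.le]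
    have hB : (c : ℝ) * N - (L : ℝ) * pcnt p N ≤ (L : ℝ) * L := by
      nlinarith [mul_le_mul_of_nonneg_right hNubR.le hcnn,
        mul_le_mul_of_nonneg_right hlbR hLpos.le,
        mul_le_mul_of_nonneg_right hcLR hLpos.le]
    rw [abs_sub_le_iff]
    constructor
    · rw [div_sub_div _ _ (ne_of_gt hNpos) (ne_of_gt hLpos),
        div_le_div_iff₀ (by positivity) hNpos]
      nlinarith [mul_le_mul_of_nonneg_right hA hNpos.le,
        mul_pos (mul_pos hLpos hLpos) hNpos]
    · rw [div_sub_div _ _ (ne_of_gt hLpos) (ne_of_gt hNpos),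
        div_le_div_iff₀ (by positivity) hNpos]
      nlinarith [mul_le_mul_of_nonneg_right hB hNpos.le,
        mul_pos (mul_pos hLpos hLpos) hNpos]
  rw [tendsto_iff_dist_tendsto_zero]
  apply squeeze_zero' (g := fun N : ℕ => 2 * (L : ℝ) / N)
  · exact Eventually.of_forall fun N => dist_nonneg
  · filter_upwards [eventually_ge_atTop 1] with N hN
    rw [Real.dist_eq]
    exact key N hN
  · exact tendsto_const_div_atTop_nhds_zero_nat _

/-- the set of multiples -/
def MS (S : Set ℕ) : Set ℕ := {m : ℕ | ∃ a ∈ S, ∃ n : ℕ, 0 < n ∧ m = a * n}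

lemma mem_MS {S : Set ℕ} (h0 : 0 ∉ S) {m : ℕ} (hm : 1 ≤ m) :
    m ∈ MS S ↔ ∃ a ∈ S, a ∣ m := by
  constructor
  · rintro ⟨a, ha, n, hn, rfl⟩
    exact ⟨a, ha, Dvd.intro n rfl⟩
  · rintro ⟨a, ha, n, rfl⟩
    have hapos : 0 < a := Nat.pos_of_ne_zero (fun h => h0 (h ▸ ha))
    have hn : 0 < n := by
      rcases Nat.eq_zero_or_pos n with rfl | h
      · simp at hm
      · exact h
    exact ⟨a, ha, n, hn, rfl⟩

lemma MS_mono {S S' : Set ℕ} (h : S ⊆ S') : MS S ⊆ MS S' := by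
  rintro m ⟨a, ha, n, hn, rfl⟩
  exact ⟨a, h ha, n, hn, rfl⟩

/-- period of the multiple set of a finite set -/
lemma MS_periodic (F : Finset ℕ) (h0 : 0 ∉ F) :
    ∀ m, 1 ≤ m → (m ∈ MS ↑F ↔ m + F.lcm _root_.id ∈ MS ↑F) := by
  intro m hm
  have h0' : 0 ∉ (↑F : Set ℕ) := by simpa using h0
  rw [mem_MS h0' hm, mem_MS h0' (by omega)]
  constructor
  · rintro ⟨a, ha, hd⟩
    exact ⟨a, ha, dvd_add hd (by simpa using Finset.dvd_lcm (f := _root_.id) (by simpa using ha))⟩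
  · rintro ⟨a, ha, hd⟩
    refine ⟨a, ha, ?_⟩
    have hdL : a ∣ F.lcm _root_.id := by simpa using Finset.dvd_lcm (f := _root_.id) (by simpa using ha)
    exact (Nat.dvd_add_right hdL).mp (by rwa [add_comm] at hd)

lemma lcm_pos (F : Finset ℕ) (h0 : 0 ∉ F) : 0 < F.lcm _root_.id := by
  rcases Nat.eq_zero_or_pos (F.lcm _root_.id) with h | h
  · exfalso
    rw [Finset.lcm_eq_zero_iff] at h
    rcases h with ⟨a, ha, ha0⟩
    simp only [_root_.id_eq, id_eq] at ha0
    exact h0 (by rwa [ha0] at ha)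
  · exact h

/-- density of the multiple set of a finite set -/
noncomputable def deltaF (F : Finset ℕ) : ℝ :=
  (pcnt (· ∈ MS ↑F) (F.lcm _root_.id) : ℝ) / (F.lcm _root_.id)

lemma deltaF_tendsto (F : Finset ℕ) (h0 : 0 ∉ F) :
    Tendsto (fun N : ℕ => (pcnt (· ∈ MS ↑F) N : ℝ) / N) atTop (𝓝 (deltaF F)) :=
  pcnt_periodic_tendsto (lcm_pos F h0) (MS_periodic F h0)

/-- basic comparison: counting multiples of `S` versus multiples of a subset -/
lemma pcnt_MS_le {S' S : Set ℕ} (h0 : 0 ∉ S) (hsub : S' ⊆ S) (N : ℕ) :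
    pcnt (· ∈ MS S) N ≤ pcnt (· ∈ MS S') N +
      ∑ a ∈ (Finset.Icc 1 N).filter (fun a => a ∈ S ∧ a ∉ S'), N / a := by
  classical
  set s := (Finset.Icc 1 N).filter (fun a => a ∈ S ∧ a ∉ S') with hs
  have h0' : 0 ∉ S' := fun h => h0 (hsub h)
  have hsubset : (Finset.Icc 1 N).filter (· ∈ MS S) ⊆
      (Finset.Icc 1 N).filter (· ∈ MS S') ∪
        s.biUnion (fun a => (Finset.Icc 1 N).filter (a ∣ ·)) := by
    intro m hm
    simp only [Finset.mem_filter, Finset.mem_Icc] at hm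
    obtain ⟨⟨hm1, hm2⟩, hmS⟩ := hm
    by_cases hS' : m ∈ MS S'
    · exact Finset.mem_union_left _ (by simp [Finset.mem_filter, Finset.mem_Icc, hm1, hm2, hS'])
    · apply Finset.mem_union_right
      obtain ⟨a, haS, had⟩ := (mem_MS h0 hm1).mp hmS
      have haS' : a ∉ S' := fun h => hS' ((mem_MS h0' hm1).mpr ⟨a, h, had⟩)
      have ha1 : 1 ≤ a := Nat.pos_of_ne_zero (fun h => h0 (h ▸ haS))
      have haN : a ≤ N := le_trans (Nat.le_of_dvd (by omega) had) hm2
      apply Finset.mem_biUnion.mpr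
      refine ⟨a, ?_, ?_⟩
      · simp only [hs, Finset.mem_filter, Finset.mem_Icc]
        exact ⟨⟨ha1, haN⟩, haS, haS'⟩
      · simp only [Finset.mem_filter, Finset.mem_Icc]
        exact ⟨⟨hm1, hm2⟩, had⟩
  calc pcnt (· ∈ MS S) N
      ≤ ((Finset.Icc 1 N).filter (· ∈ MS S') ∪
        s.biUnion (fun a => (Finset.Icc 1 N).filter (a ∣ ·))).card :=
        Finset.card_le_card hsubset
    _ ≤ pcnt (· ∈ MS S') N + (s.biUnion (fun a => (Finset.Icc 1 N).filter (a ∣ ·))).card :=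
        Finset.card_union_le _ _
    _ ≤ pcnt (· ∈ MS S') N + ∑ a ∈ s, ((Finset.Icc 1 N).filter (a ∣ ·)).card := by
        gcongr
        exact Finset.card_biUnion_le
    _ = pcnt (· ∈ MS S') N + ∑ a ∈ s, N / a := by
        congr 1
        apply Finset.sum_congr rfl
        intro a _
        have : Finset.Icc 1 N = Finset.Ioc 0 N := by
          ext x; simp only [Finset.mem_Icc, Finset.mem_Ioc]; omega
        rw [this]
        exact Nat.Ioc_filter_dvd_card_eq_div N a

/-- Heilbronn–Rohrbach inequality (counting version over full periods) -/
lemma HR (F : Finset ℕ) (h1 : ∀ a ∈ F, 1 ≤ a) :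
    ∀ c : ℕ, (∏ a ∈ F, (1 - 1 / (a : ℝ))) * ((∏ a ∈ F, a : ℕ) * c : ℕ)
      ≤ (pcnt (fun m => ∀ a ∈ F, ¬ a ∣ m) ((∏ a ∈ F, a) * c) : ℝ) := by
  classical
  induction F using Finset.induction with
  | empty =>
    intro c
    have he : pcnt (fun m => ∀ a ∈ (∅ : Finset ℕ), ¬ a ∣ m) ((∏ a ∈ (∅ : Finset ℕ), a) * c) = c := by
      have h1 : pcnt (fun m => ∀ a ∈ (∅ : Finset ℕ), ¬ a ∣ m) ((∏ a ∈ (∅ : Finset ℕ), a) * c)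
          = pcnt (fun _ => True) ((∏ a ∈ (∅ : Finset ℕ), a) * c) :=
        pcnt_congr (fun m _ => by simp) _
      have h3 : pcnt (fun _ : ℕ => ¬ True) ((∏ a ∈ (∅ : Finset ℕ), a) * c) = 0 :=
        pcnt_false (fun m h => h trivial) _
      have h4 := pcnt_add_pcnt_not (fun _ : ℕ => True) ((∏ a ∈ (∅ : Finset ℕ), a) * c)
      have h2 : pcnt (fun _ : ℕ => True) ((∏ a ∈ (∅ : Finset ℕ), a) * c)
          = (∏ a ∈ (∅ : Finset ℕ), a) * c := by
        omega
      rw [h1, h2, Finset.prod_empty, one_mul]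
    rw [he, Finset.prod_empty, Finset.prod_empty]
    push_cast
    norm_num
  | @insert b F hbF ih =>
    intro c
    have hb1 : 1 ≤ b := h1 b (Finset.mem_insert_self b F)
    have h1F : ∀ a ∈ F, 1 ≤ a := fun a ha => h1 a (Finset.mem_insert_of_mem ha)
    set Q : ℕ := ∏ a ∈ F, a with hQ
    have hQpos : 0 < Q := Finset.prod_pos (fun a ha => h1F a ha)
    have hQins : (∏ a ∈ insert b F, a) = b * Q := by
      rw [Finset.prod_insert hbF]
    set P : ℕ → Prop := fun m => ∀ a ∈ F, ¬ a ∣ m with hP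
    have hPper : ∀ m, 1 ≤ m → (P m ↔ P (m + Q)) := by
      intro m _
      constructor
      · intro h a ha had
        have haQ : a ∣ Q := Finset.dvd_prod_of_mem _ ha
        exact h a ha ((Nat.dvd_add_right haQ).mp (by rwa [add_comm] at had))
      · intro h a ha had
        have haQ : a ∣ Q := Finset.dvd_prod_of_mem _ ha
        exact h a ha (dvd_add had haQ)
    -- split the count according to divisibility by b
    have hsplit : pcnt (fun m => P m ∧ b ∣ m) (b * Q * c)
        + pcnt (fun m => ∀ a ∈ insert b F, ¬ a ∣ m) (b * Q * c)
        = pcnt P (b * Q * c) := by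
      have hcongr : pcnt (fun m => ∀ a ∈ insert b F, ¬ a ∣ m) (b * Q * c)
          = pcnt (fun m => P m ∧ ¬ b ∣ m) (b * Q * c) := by
        apply pcnt_congr
        intro m _
        simp only [Finset.mem_insert, hP]
        constructor
        · intro h
          exact ⟨fun a ha => h a (Or.inr ha), h b (Or.inl rfl)⟩
        · rintro ⟨h, hb⟩ a (rfl | ha)
          · exact hb
          · exact h a ha
      rw [hcongr]
      rw [pcnt, pcnt, pcnt]
      set s := Finset.Icc 1 (b * Q * c) with hs
      have hdisj : Disjoint (s.filter (fun m => P m ∧ b ∣ m))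
          (s.filter (fun m => P m ∧ ¬ b ∣ m)) := by
        rw [Finset.disjoint_left]
        intro x hx hx'
        simp only [Finset.mem_filter] at hx hx'
        exact hx'.2.2 hx.2.2
      have hunion : s.filter (fun m => P m ∧ b ∣ m) ∪ s.filter (fun m => P m ∧ ¬ b ∣ m)
          = s.filter P := by
        ext x
        simp only [Finset.mem_union, Finset.mem_filter]
        tauto
      have h := Finset.card_union_of_disjoint hdisj
      rw [hunion] at h
      convert h.symm using 4
    -- the divisible-by-b part is at most ν(F, Q*c)
    have hdivb : pcnt (fun m => P m ∧ b ∣ m) (b * Q * c) ≤ pcnt P (Q * c) := by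
      have hbij : pcnt (fun m => P m ∧ b ∣ m) (b * (Q * c))
          = ((Finset.Icc 1 (Q * c)).filter (fun j => P (b * j))).card := by
        rw [pcnt]
        symm
        apply Finset.card_bij (fun j _ => b * j)
        · intro j hj
          simp only [Finset.mem_filter, Finset.mem_Icc] at hj ⊢
          refine ⟨⟨by nlinarith [hj.1.1], by nlinarith [hj.1.2]⟩, hj.2, Dvd.intro j rfl⟩
        · intro x hx y hy hxy
          have : 0 < b := hb1
          exact Nat.eq_of_mul_eq_mul_left this hxy
        · intro m hm
          simp only [Finset.mem_filter, Finset.mem_Icc] at hm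
          obtain ⟨⟨hm1, hm2⟩, hPm, j, rfl⟩ := hm
          refine ⟨j, ?_, rfl⟩
          simp only [Finset.mem_filter, Finset.mem_Icc]
          have hj1 : 1 ≤ j := by nlinarith
          have hj2 : j ≤ Q * c := by nlinarith
          exact ⟨⟨hj1, hj2⟩, hPm⟩
      have hsub : ((Finset.Icc 1 (Q * c)).filter (fun j => P (b * j))).card
          ≤ pcnt P (Q * c) := by
        apply Finset.card_le_card
        intro j hj
        simp only [Finset.mem_filter] at hj ⊢
        refine ⟨hj.1, ?_⟩
        intro a ha had
        exact hj.2 a ha (Dvd.dvd.mul_left had b)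
      calc pcnt (fun m => P m ∧ b ∣ m) (b * Q * c)
          = pcnt (fun m => P m ∧ b ∣ m) (b * (Q * c)) := by ring_nf
        _ = ((Finset.Icc 1 (Q * c)).filter (fun j => P (b * j))).card := hbij
        _ ≤ pcnt P (Q * c) := hsub
    -- periodicity computations
    have hper1 : pcnt P (b * Q * c) = (b * c) * pcnt P Q := by
      have : b * Q * c = (b * c) * Q := by ring
      rw [this, pcnt_periodic hQpos hPper]
    have hper2 : pcnt P (Q * c) = c * pcnt P Q := by
      rw [mul_comm, pcnt_periodic hQpos hPper]
    -- IH at c = 1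
    have hIH : (∏ a ∈ F, (1 - 1 / (a : ℝ))) * (Q : ℝ) ≤ (pcnt P Q : ℝ) := by
      have := ih h1F 1
      simpa [hQ] using this
    -- assemble
    have hlow : ((b : ℝ) * c - c) * (pcnt P Q : ℝ)
        ≤ (pcnt (fun m => ∀ a ∈ insert b F, ¬ a ∣ m) (b * Q * c) : ℝ) := by
      have h1' : (pcnt (fun m => ∀ a ∈ insert b F, ¬ a ∣ m) (b * Q * c) : ℝ)
          = (pcnt P (b * Q * c) : ℝ) - (pcnt (fun m => P m ∧ b ∣ m) (b * Q * c) : ℝ) := by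
        have := hsplit
        have : ((pcnt (fun m => P m ∧ b ∣ m) (b * Q * c) : ℕ) : ℝ)
            + ((pcnt (fun m => ∀ a ∈ insert b F, ¬ a ∣ m) (b * Q * c) : ℕ) : ℝ)
            = ((pcnt P (b * Q * c) : ℕ) : ℝ) := by exact_mod_cast congrArg (fun n : ℕ => (n : ℝ)) this
        linarith
      rw [h1']
      have h2' : (pcnt P (b * Q * c) : ℝ) = (b : ℝ) * c * (pcnt P Q : ℝ) := by
        rw [hper1]; push_cast; ring
      have h3' : (pcnt (fun m => P m ∧ b ∣ m) (b * Q * c) : ℝ) ≤ (c : ℝ) * (pcnt P Q : ℝ) := by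
        calc (pcnt (fun m => P m ∧ b ∣ m) (b * Q * c) : ℝ)
            ≤ (pcnt P (Q * c) : ℝ) := by exact_mod_cast hdivb
          _ = (c : ℝ) * (pcnt P Q : ℝ) := by rw [hper2]; push_cast; ring
      rw [h2']
      linarith
    -- final computation
    have hprod_ins : (∏ a ∈ insert b F, (1 - 1 / (a : ℝ)))
        = (1 - 1 / (b : ℝ)) * ∏ a ∈ F, (1 - 1 / (a : ℝ)) := Finset.prod_insert hbF
    have hbR : (1 : ℝ) ≤ (b : ℝ) := by exact_mod_cast hb1
    have hprod_nonneg : (0 : ℝ) ≤ ∏ a ∈ F, (1 - 1 / (a : ℝ)) := by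
      apply Finset.prod_nonneg
      intro a ha
      have : (1 : ℝ) ≤ (a : ℝ) := by exact_mod_cast h1F a ha
      have : 1 / (a : ℝ) ≤ 1 := by
        rw [div_le_one (by linarith)]; linarith
      linarith
    have hbne : (b : ℝ) ≠ 0 := by linarith
    rw [hprod_ins, hQins]
    push_cast
    have hkey : (1 - 1 / (b : ℝ)) * (∏ a ∈ F, (1 - 1 / (a : ℝ))) * ((b : ℝ) * Q * c)
        = ((b : ℝ) * c - c) * ((∏ a ∈ F, (1 - 1 / (a : ℝ))) * Q) := by
      field_simp
    rw [hkey]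
    calc ((b : ℝ) * c - c) * ((∏ a ∈ F, (1 - 1 / (a : ℝ))) * Q)
        ≤ ((b : ℝ) * c - c) * (pcnt P Q : ℝ) := by
          apply mul_le_mul_of_nonneg_left hIH
          have : (0 : ℝ) ≤ (c : ℝ) := Nat.cast_nonneg c
          nlinarith
      _ ≤ _ := by
          convert hlow using 3 <;> push_cast <;> ring_nf

/-- upper bound on the density of the multiple set of a finite set -/
lemma deltaF_le (F : Finset ℕ) (h0 : 0 ∉ F) :
    deltaF F ≤ 1 - ∏ a ∈ F, (1 - 1 / (a : ℝ)) := by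
  classical
  have h1 : ∀ a ∈ F, 1 ≤ a := by
    intro a ha
    exact Nat.pos_of_ne_zero (fun h => h0 (h ▸ ha))
  set Q : ℕ := ∏ a ∈ F, a with hQ
  have hQpos : 0 < Q := Finset.prod_pos (fun a ha => h1 a ha)
  have htQ : Tendsto (fun c : ℕ => Q * c) atTop atTop := by
    apply tendsto_atTop_atTop.2
    intro m
    exact ⟨m, fun c hc => le_trans hc (Nat.le_mul_of_pos_left c hQpos)⟩
  have htend : Tendsto (fun c : ℕ => (pcnt (· ∈ MS ↑F) (Q * c) : ℝ) / (Q * c : ℕ))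
      atTop (𝓝 (deltaF F)) := (deltaF_tendsto F h0).comp htQ
  apply le_of_tendsto htend
  filter_upwards [eventually_ge_atTop 1] with c hc
  have hNpos : 0 < Q * c := Nat.mul_pos hQpos hc
  have hNposR : (0 : ℝ) < ((Q * c : ℕ) : ℝ) := by exact_mod_cast hNpos
  have hcompl : pcnt (fun m => ¬ m ∈ MS ↑F) (Q * c) = pcnt (fun m => ∀ a ∈ F, ¬ a ∣ m) (Q * c) := by
    apply pcnt_congr
    intro m hm
    have h0' : 0 ∉ (↑F : Set ℕ) := by simpa using h0
    rw [mem_MS h0' hm]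
    push_neg
    simp
  have hsum := pcnt_add_pcnt_not (· ∈ MS ↑F) (Q * c)
  have hHR := HR F h1 c
  rw [← hQ] at hHR
  have hν : (∏ a ∈ F, (1 - 1 / (a : ℝ))) * ((Q * c : ℕ) : ℝ)
      ≤ (pcnt (fun m => ¬ m ∈ MS ↑F) (Q * c) : ℝ) := by
    rw [hcompl]
    exact hHR
  have hcnt : (pcnt (· ∈ MS ↑F) (Q * c) : ℝ)
      = ((Q * c : ℕ) : ℝ) - (pcnt (fun m => ¬ m ∈ MS ↑F) (Q * c) : ℝ) := by
    have : ((pcnt (· ∈ MS ↑F) (Q * c) : ℕ) : ℝ)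
        + ((pcnt (fun m => ¬ m ∈ MS ↑F) (Q * c) : ℕ) : ℝ) = ((Q * c : ℕ) : ℝ) := by
      exact_mod_cast congrArg (fun n : ℕ => (n : ℝ)) hsum
    linarith
  rw [div_le_iff₀ hNposR, hcnt]
  nlinarith

theorem set_of_multiples_has_density
    (A : Set ℕ) (hA0 : 0 ∉ A) (hthin : Thin A) :
    ∃ d : ℝ, HasDensity {m : ℕ | ∃ a ∈ A, ∃ n : ℕ, 0 < n ∧ m = a * n} d ∧
      (1 ∉ A → d < 1) := by
  classical
  -- the truncations
  set F : ℕ → Finset ℕ := fun k => (Finset.Icc 1 k).filter (· ∈ A) with hF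
  have hF0 : ∀ k, 0 ∉ F k := by
    intro k h
    simp only [hF, Finset.mem_filter, Finset.mem_Icc] at h
    omega
  have hFsubA : ∀ k, (↑(F k) : Set ℕ) ⊆ A := by
    intro k a ha
    simp only [hF, Finset.coe_filter, Set.mem_setOf_eq] at ha
    exact ha.2
  have hFmono : ∀ {k k'}, k ≤ k' → (↑(F k) : Set ℕ) ⊆ ↑(F k') := by
    intro k k' hkk' a ha
    simp only [hF, Finset.coe_filter, Set.mem_setOf_eq, Finset.mem_Icc] at ha ⊢
    exact ⟨⟨ha.1.1, le_trans ha.1.2 hkk'⟩, ha.2⟩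
  -- the indicator function and tails
  set f : ℕ → ℝ := Set.indicator A (fun a => 1 / (a : ℝ)) with hf
  have hfsummable : Summable f := by
    rw [hf]
    exact summable_subtype_iff_indicator.mp hthin
  have hfnonneg : ∀ a, 0 ≤ f a := by
    intro a
    apply Set.indicator_nonneg
    intro x _
    positivity
  set tail : ℕ → ℝ := fun k => ∑' n, f (n + k) with htail
  have htail0 : Tendsto tail atTop (𝓝 0) := by
    rw [htail]
    exact tendsto_sum_nat_add f
  have htail_nonneg : ∀ k, 0 ≤ tail k := by
    intro k
    apply tsum_nonneg
    intro n
    exact hfnonneg _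
  -- finite sums of reciprocals over far-out elements are bounded by tails
  have hsum_le_tail : ∀ (k : ℕ) (s : Finset ℕ), (∀ a ∈ s, a ∈ A ∧ k ≤ a) →
      ∑ a ∈ s, (1 : ℝ) / a ≤ tail k := by
    intro k s hs
    have hsummable' : Summable (fun n => f (n + k)) := (summable_nat_add_iff k).2 hfsummable
    have heq : ∑ a ∈ s, (1 : ℝ) / a = ∑ n ∈ s.image (· - k), f (n + k) := by
      rw [Finset.sum_image (f := fun n => f (n + k))]
      · apply Finset.sum_congr rfl
        intro a ha
        have hak : k ≤ a := (hs a ha).2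
        have haA : a ∈ A := (hs a ha).1
        rw [show a - k + k = a by omega, hf, Set.indicator_of_mem haA]
      · intro a ha b hb hab
        have := (hs a ha).2
        have := (hs b hb).2
        simp only at hab
        omega
    rw [heq, htail]
    exact Summable.sum_le_tsum _ (fun n _ => hfnonneg _) hsummable'
  -- key comparison
  have hkey : ∀ (k : ℕ) (S : Set ℕ), 0 ∉ S → (↑(F k) : Set ℕ) ⊆ S → S ⊆ A →
      ∀ N : ℕ, 1 ≤ N →
      (pcnt (· ∈ MS S) N : ℝ) / N ≤ (pcnt (· ∈ MS ↑(F k)) N : ℝ) / N + tail (k + 1) := by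
    intro k S h0 hsub hSA N hN
    have hNpos : (0 : ℝ) < N := by exact_mod_cast hN
    have hle := pcnt_MS_le h0 hsub N
    set s := (Finset.Icc 1 N).filter (fun a => a ∈ S ∧ a ∉ (↑(F k) : Set ℕ)) with hs
    have hsprop : ∀ a ∈ s, a ∈ A ∧ k + 1 ≤ a := by
      intro a ha
      simp only [hs, Finset.mem_filter, Finset.mem_Icc] at ha
      obtain ⟨⟨ha1, _⟩, haS, haF⟩ := ha
      refine ⟨hSA haS, ?_⟩
      by_contra h
      push_neg at h
      apply haF
      simp only [hF, Finset.coe_filter, Set.mem_setOf_eq, Finset.mem_Icc]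
      exact ⟨⟨ha1, by omega⟩, hSA haS⟩
    have hcast : ((∑ a ∈ s, N / a : ℕ) : ℝ) ≤ (N : ℝ) * tail (k + 1) := by
      push_cast
      have h1 : ∀ a ∈ s, ((N / a : ℕ) : ℝ) ≤ (N : ℝ) * (1 / a) := by
        intro a ha
        have ha1 : 1 ≤ a := ((hsprop a ha).2).trans' (by omega)
        have : ((N / a : ℕ) : ℝ) ≤ (N : ℝ) / a := Nat.cast_div_le
        rw [mul_one_div]
        exact this
      calc (∑ a ∈ s, ((N / a : ℕ) : ℝ)) ≤ ∑ a ∈ s, (N : ℝ) * (1 / a) :=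
            Finset.sum_le_sum h1
        _ = (N : ℝ) * ∑ a ∈ s, (1 : ℝ) / a := by rw [Finset.mul_sum]
        _ ≤ (N : ℝ) * tail (k + 1) := by
            apply mul_le_mul_of_nonneg_left _ (le_of_lt hNpos)
            exact hsum_le_tail (k + 1) s hsprop
    have hleR : (pcnt (· ∈ MS S) N : ℝ)
        ≤ (pcnt (· ∈ MS ↑(F k)) N : ℝ) + (N : ℝ) * tail (k + 1) := by
      calc (pcnt (· ∈ MS S) N : ℝ)
          ≤ ((pcnt (· ∈ MS ↑(F k)) N + ∑ a ∈ s, N / a : ℕ) : ℝ) := by exact_mod_cast hle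
        _ = (pcnt (· ∈ MS ↑(F k)) N : ℝ) + ((∑ a ∈ s, N / a : ℕ) : ℝ) := by push_cast; ring
        _ ≤ (pcnt (· ∈ MS ↑(F k)) N : ℝ) + (N : ℝ) * tail (k + 1) := by linarith
    rw [div_add' _ _ _ (ne_of_gt hNpos)]
    rw [div_le_div_iff₀ hNpos hNpos]
    nlinarith
  -- the sequence of densities
  set δ : ℕ → ℝ := fun k => deltaF (F k) with hδ
  have hδ_tendsto : ∀ k, Tendsto (fun N : ℕ => (pcnt (· ∈ MS ↑(F k)) N : ℝ) / N) atTop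
      (𝓝 (δ k)) := fun k => deltaF_tendsto (F k) (hF0 k)
  have hδ_mono : Monotone δ := by
    intro k k' hkk'
    apply le_of_tendsto_of_tendsto' (hδ_tendsto k) (hδ_tendsto k')
    intro N
    gcongr
    exact_mod_cast pcnt_mono_pred (fun m hm => MS_mono (hFmono hkk') hm) N
  have hδ_le_one : ∀ k, δ k ≤ 1 := by
    intro k
    apply le_of_tendsto (hδ_tendsto k)
    filter_upwards [eventually_ge_atTop 1] with N hN
    have hNpos : (0 : ℝ) < N := by exact_mod_cast hN
    rw [div_le_one hNpos]
    exact_mod_cast pcnt_le _ N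
  have hδ_bdd : BddAbove (Set.range δ) := by
    refine ⟨1, ?_⟩
    rintro x ⟨k, rfl⟩
    exact hδ_le_one k
  set d : ℝ := ⨆ k, δ k with hd
  have hδ_tendsto_d : Tendsto δ atTop (𝓝 d) := tendsto_atTop_ciSup hδ_mono hδ_bdd
  have hδ_le_d : ∀ k, δ k ≤ d := fun k => le_ciSup hδ_bdd k
  -- d ≤ δ k + tail (k+1)
  have hd_le : ∀ k, d ≤ δ k + tail (k + 1) := by
    intro k
    apply le_of_tendsto hδ_tendsto_d
    filter_upwards [eventually_ge_atTop k] with k' hk'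
    apply le_of_tendsto_of_tendsto (hδ_tendsto k')
      ((hδ_tendsto k).add tendsto_const_nhds)
    filter_upwards [eventually_ge_atTop 1] with N hN
    have h0' : 0 ∉ (↑(F k') : Set ℕ) := by simpa using hF0 k'
    exact hkey k ↑(F k') h0' (hFmono hk') (hFsubA k') N hN
  -- main density statement
  have hMS_eq : {m : ℕ | ∃ a ∈ A, ∃ n : ℕ, 0 < n ∧ m = a * n} = MS A := rfl
  have hmain : HasDensity (MS A) d := by
    rw [HasDensity]
    rw [Metric.tendsto_atTop]
    intro ε hε
    have hε3 : 0 < ε / 3 := by linarith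
    -- choose k
    have h1 : ∀ᶠ k in atTop, |δ k - d| < ε / 3 := by
      have := hδ_tendsto_d
      rw [Metric.tendsto_atTop] at this
      obtain ⟨K, hK⟩ := this (ε / 3) hε3
      filter_upwards [eventually_ge_atTop K] with k hk
      have := hK k hk
      rwa [Real.dist_eq] at this
    have h2 : ∀ᶠ k in atTop, tail (k + 1) < ε / 3 := by
      have ht : Tendsto (fun k => tail (k + 1)) atTop (𝓝 0) :=
        htail0.comp (tendsto_add_atTop_nat 1)
      rw [Metric.tendsto_atTop] at ht
      obtain ⟨K, hK⟩ := ht (ε / 3) hε3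
      filter_upwards [eventually_ge_atTop K] with k hk
      have := hK k hk
      rw [Real.dist_eq, sub_zero] at this
      calc tail (k + 1) ≤ |tail (k + 1)| := le_abs_self _
        _ < ε / 3 := this
    obtain ⟨k, hk1, hk2⟩ := (h1.and h2).exists
    -- choose N₀
    have h3 := hδ_tendsto k
    rw [Metric.tendsto_atTop] at h3
    obtain ⟨N₀, hN₀⟩ := h3 (ε / 3) hε3
    refine ⟨max N₀ 1, ?_⟩
    intro N hN
    have hN1 : 1 ≤ N := le_trans (le_max_right N₀ 1) hN
    have hNN₀ : N₀ ≤ N := le_trans (le_max_left N₀ 1) hN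
    have hNpos : (0 : ℝ) < N := by exact_mod_cast hN1
    have hFk := hN₀ N hNN₀
    rw [Real.dist_eq] at hFk
    rw [Real.dist_eq]
    rw [cnt_eq_pcnt]
    have habs := abs_sub_lt_iff.mp hFk
    have habs2 := abs_sub_lt_iff.mp hk1
    -- lower bound
    have hlower : (pcnt (· ∈ MS ↑(F k)) N : ℝ) / N ≤ (pcnt (· ∈ MS A) N : ℝ) / N := by
      gcongr
      exact_mod_cast pcnt_mono_pred (fun m hm => MS_mono (hFsubA k) hm) N
    -- upper bound
    have hupper : (pcnt (· ∈ MS A) N : ℝ) / N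
        ≤ (pcnt (· ∈ MS ↑(F k)) N : ℝ) / N + tail (k + 1) := by
      have h0' : (↑(F k) : Set ℕ) ⊆ A := hFsubA k
      exact hkey k A hA0 h0' (le_refl A) N hN1
    have hδkd : δ k ≤ d := hδ_le_d k
    rw [abs_sub_lt_iff]
    constructor
    · -- pcnt MS A / N - d < ε
      have : (pcnt (· ∈ MS A) N : ℝ) / N < δ k + ε / 3 + ε / 3 := by
        have := habs.1
        linarith
      linarith
    · -- d - pcnt MS A / N < ε
      have : δ k - ε / 3 < (pcnt (· ∈ MS A) N : ℝ) / N := by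
        have := habs.2
        linarith
      have hd' : d < δ k + ε / 3 := by linarith [habs2.2]
      linarith
  refine ⟨d, ?_, ?_⟩
  · rw [hMS_eq]; exact hmain
  · -- d < 1 when 1 ∉ A
    intro h1A
    set T : ℝ := ∑' a, f a with hT
    set P : ℝ := Real.exp (-(2 * T)) with hP
    have hPpos : 0 < P := Real.exp_pos _
    -- product lower bound
    have hprod_ge : ∀ k, P ≤ ∏ a ∈ F k, (1 - 1 / (a : ℝ)) := by
      intro k
      have h2le : ∀ a ∈ F k, 2 ≤ a := by
        intro a ha
        simp only [hF, Finset.mem_filter, Finset.mem_Icc] at ha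
        have : a ≠ 1 := fun h => h1A (h ▸ ha.2)
        omega
      have hfactor : ∀ a ∈ F k, Real.exp (-(2 * (1 / (a : ℝ)))) ≤ 1 - 1 / (a : ℝ) := by
        intro a ha
        have ha2 : (2 : ℝ) ≤ (a : ℝ) := by exact_mod_cast h2le a ha
        set x : ℝ := 1 / (a : ℝ) with hx
        have hx0 : 0 < x := by positivity
        have hx12 : x ≤ 1 / 2 := by
          rw [hx, div_le_div_iff₀ (by linarith) (by norm_num)]
          linarith
        have hexp : 1 + 2 * x ≤ Real.exp (2 * x) := by
          have := Real.add_one_le_exp (2 * x)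
          linarith
        have hexppos : 0 < Real.exp (2 * x) := Real.exp_pos _
        have hinv : Real.exp (-(2 * x)) = (Real.exp (2 * x))⁻¹ := by
          rw [Real.exp_neg]
        rw [hinv]
        rw [inv_le_iff_one_le_mul₀ hexppos]
        nlinarith
      calc P = Real.exp (-(2 * T)) := rfl
        _ ≤ Real.exp (-(2 * ∑ a ∈ F k, (1 / (a : ℝ)))) := by
            apply Real.exp_le_exp.mpr
            have hsumle : ∑ a ∈ F k, (1 / (a : ℝ)) ≤ T := by
              have : ∑ a ∈ F k, (1 / (a : ℝ)) = ∑ a ∈ F k, f a := by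
                apply Finset.sum_congr rfl
                intro a ha
                rw [hf, Set.indicator_of_mem (hFsubA k ha)]
              rw [this, hT]
              exact Summable.sum_le_tsum _ (fun a _ => hfnonneg a) hfsummable
            linarith
        _ = ∏ a ∈ F k, Real.exp (-(2 * (1 / (a : ℝ)))) := by
            rw [← Real.exp_sum]
            congr 1
            rw [Finset.mul_sum, ← Finset.sum_neg_distrib]
        _ ≤ ∏ a ∈ F k, (1 - 1 / (a : ℝ)) := by
            apply Finset.prod_le_prod
            · intro a _; positivity
            · exact hfactor
    -- choose k with small tail
    have htail_small : ∃ k, tail (k + 1) < P := by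
      have ht : Tendsto (fun k => tail (k + 1)) atTop (𝓝 0) :=
        htail0.comp (tendsto_add_atTop_nat 1)
      rw [Metric.tendsto_atTop] at ht
      obtain ⟨K, hK⟩ := ht P hPpos
      refine ⟨K, ?_⟩
      have := hK K (le_refl K)
      rw [Real.dist_eq, sub_zero] at this
      calc tail (K + 1) ≤ |tail (K + 1)| := le_abs_self _
        _ < P := this
    obtain ⟨k, hk⟩ := htail_small
    have hδk : δ k ≤ 1 - P := by
      calc δ k ≤ 1 - ∏ a ∈ F k, (1 - 1 / (a : ℝ)) := deltaF_le (F k) (hF0 k)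
        _ ≤ 1 - P := by linarith [hprod_ge k]
    calc d ≤ δ k + tail (k + 1) := hd_le k
      _ < (1 - P) + P := by linarith
      _ = 1 := by ring
end

section
/- Let A be a set of positive integers, P a set of primes, and for each p ∈ P let K_p be a set of nonnegative integers. Let S be the set of positive integers n such that no a ∈ A divides n and there are no p ∈ P and k ∈ K_p with p^k exactly dividing n. Let P_1 = {p ∈ P : 1 ∈ K_p}. If A ∪ P_1 is thin, then S possesses an asymptotic density. Moreover, if 0 ∉ K_p for all p ∈ P and 1 ∉ A, then the density of S is positive. -/
open Filter Topology ArithmeticFunction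

open Classical in
lemma cnt_eq_card_s2 (A : Set ℕ) (N : ℕ) :
    cnt A N = ((Finset.Icc 1 N).filter (· ∈ A)).card := by
  classical
  rw [cnt, ← Set.ncard_coe_finset]
  congr 1
  ext n
  simp only [Set.mem_inter_iff, Set.mem_Icc, Finset.coe_filter, Finset.mem_Icc, Set.mem_setOf_eq]
  tauto

lemma cnt_mono {A B : Set ℕ} (h : A ⊆ B) (N : ℕ) : cnt A N ≤ cnt B N := by
  classical
  rw [cnt_eq_card_s2, cnt_eq_card_s2]
  refine Finset.card_le_card ?_
  intro n hn
  simp only [Finset.mem_filter] at *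
  exact ⟨hn.1, h hn.2⟩

lemma cnt_le_self (A : Set ℕ) (N : ℕ) : cnt A N ≤ N := by
  classical
  rw [cnt_eq_card_s2]
  calc ((Finset.Icc 1 N).filter (· ∈ A)).card ≤ (Finset.Icc 1 N).card :=
        Finset.card_filter_le _ _
    _ = N := by rw [Nat.card_Icc]; omega

lemma cnt_union_le (A B : Set ℕ) (N : ℕ) : cnt (A ∪ B) N ≤ cnt A N + cnt B N := by
  classical
  rw [cnt_eq_card_s2, cnt_eq_card_s2, cnt_eq_card_s2]
  refine le_trans (Finset.card_le_card ?_) (Finset.card_union_le _ _)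
  intro n hn
  simp only [Finset.mem_filter, Finset.mem_union, Set.mem_union] at *
  tauto

lemma cnt_dvd_le {A : Set ℕ} {m : ℕ} (h : ∀ n ∈ A, m ∣ n) (N : ℕ) :
    cnt A N ≤ N / m := by
  classical
  rw [cnt_eq_card_s2, ← Nat.Ioc_filter_dvd_card_eq_div]
  refine Finset.card_le_card ?_
  intro n hn
  simp only [Finset.mem_filter, Finset.mem_Icc, Finset.mem_Ioc] at *
  exact ⟨⟨by omega, hn.1.2⟩, h n hn.2⟩

lemma cnt_le_sum {B : Set ℕ} {ι : Type*} (F : Finset ι) (C : ι → Set ℕ) (N : ℕ)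
    (hcov : ∀ n, 1 ≤ n → n ≤ N → n ∈ B → ∃ i ∈ F, n ∈ C i) :
    cnt B N ≤ ∑ i ∈ F, cnt (C i) N := by
  classical
  rw [cnt_eq_card_s2]
  calc ((Finset.Icc 1 N).filter (· ∈ B)).card
      ≤ (F.biUnion (fun i => (Finset.Icc 1 N).filter (· ∈ C i))).card := by
        refine Finset.card_le_card ?_
        intro n hn
        simp only [Finset.mem_filter, Finset.mem_Icc, Finset.mem_biUnion] at *
        obtain ⟨i, hi, hci⟩ := hcov n hn.1.1 hn.1.2 hn.2
        exact ⟨i, hi, hn.1, hci⟩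
    _ ≤ ∑ i ∈ F, ((Finset.Icc 1 N).filter (· ∈ C i)).card := Finset.card_biUnion_le
    _ = ∑ i ∈ F, cnt (C i) N := by simp [cnt_eq_card_s2]

lemma cnt_rel_le {E : Set ℕ} {m : ℕ} (hm : 1 ≤ m)
    (hdiv : ∀ n, n ∈ E → m ∣ n → n / m ∈ E) (N : ℕ) :
    cnt {n | n ∈ E ∧ m ∣ n} N ≤ cnt E (N / m) := by
  classical
  rw [cnt_eq_card_s2, cnt_eq_card_s2]
  refine Finset.card_le_card_of_injOn (· / m) ?_ ?_
  · intro n hn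
    simp only [Finset.mem_coe, Finset.mem_filter, Finset.mem_Icc, Set.mem_setOf_eq] at *
    obtain ⟨⟨h1, h2⟩, hE, hdv⟩ := hn
    have hmn : m ≤ n := Nat.le_of_dvd (by omega) hdv
    refine ⟨⟨?_, Nat.div_le_div_right h2⟩, hdiv n hE hdv⟩
    exact (Nat.one_le_div_iff (by omega)).2 hmn
  · intro a ha b hb hab
    simp only [Finset.coe_filter, Set.mem_setOf_eq] at ha hb
    have : m * (a / m) = m * (b / m) := by simp only at hab; rw [hab]
    rwa [Nat.mul_div_cancel' ha.2.2, Nat.mul_div_cancel' hb.2.2] at this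



section Periodic
variable {S : Set ℕ} {M : ℕ}

lemma cnt_periodic_step (hM : 1 ≤ M) (hper : ∀ n, 1 ≤ n → (n ∈ S ↔ n + M ∈ S)) (N : ℕ) :
    cnt S (N + M) = cnt S M + cnt S N := by
  classical
  rw [cnt_eq_card_s2, cnt_eq_card_s2, cnt_eq_card_s2]
  have hsplit : Finset.Icc 1 (N + M) = Finset.Icc 1 M ∪ Finset.Ioc M (N + M) := by
    ext x; simp only [Finset.mem_Icc, Finset.mem_union, Finset.mem_Ioc]; omega
  rw [hsplit, Finset.filter_union, Finset.card_union_of_disjoint]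
  · congr 1
    refine (Finset.card_bij (fun n _ => n + M) ?_ ?_ ?_).symm
    · intro n hn
      simp only [Finset.mem_filter, Finset.mem_Icc, Finset.mem_Ioc] at hn ⊢
      exact ⟨⟨by omega, by omega⟩, (hper n hn.1.1).1 hn.2⟩
    · intro a ha b hb hab
      simpa using hab
    · intro n hn
      simp only [Finset.mem_filter, Finset.mem_Icc, Finset.mem_Ioc] at hn ⊢
      refine ⟨n - M, ⟨⟨by omega, by omega⟩, ?_⟩, by omega⟩
      have := (hper (n - M) (by omega)).2
      have he : n - M + M = n := by omega
      rw [he] at this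
      exact this hn.2
  · refine Finset.disjoint_filter_filter ?_
    rw [Finset.disjoint_left]
    intro x hx hx'
    simp only [Finset.mem_Icc, Finset.mem_Ioc] at *
    omega

lemma cnt_periodic_mul (hM : 1 ≤ M) (hper : ∀ n, 1 ≤ n → (n ∈ S ↔ n + M ∈ S)) (q : ℕ) :
    cnt S (q * M) = q * cnt S M := by
  induction q with
  | zero => simp [cnt]
  | succ q ih =>
    have : (q + 1) * M = q * M + M := by ring
    rw [this, cnt_periodic_step hM hper, ih]
    ring

lemma cnt_periodic_mul_add (hM : 1 ≤ M) (hper : ∀ n, 1 ≤ n → (n ∈ S ↔ n + M ∈ S))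
    (q r : ℕ) : cnt S (q * M + r) = q * cnt S M + cnt S r := by
  induction q with
  | zero => simp
  | succ q ih =>
    have h1 : (q + 1) * M + r = (q * M + r) + M := by ring
    rw [h1, cnt_periodic_step hM hper, ih]
    ring

lemma cnt_periodic_bound (hM : 1 ≤ M) (hper : ∀ n, 1 ≤ n → (n ∈ S ↔ n + M ∈ S)) (N : ℕ) :
    |(cnt S N : ℝ) - (cnt S M : ℝ) / M * N| ≤ M := by
  have hMR : (0:ℝ) < M := by exact_mod_cast hM
  set c := cnt S M with hc
  have hcM : c ≤ M := cnt_le_self S M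
  obtain ⟨q, r, hr, hN⟩ : ∃ q r, r < M ∧ N = q * M + r := by
    refine ⟨N / M, N % M, Nat.mod_lt _ hM, ?_⟩
    rw [Nat.mul_comm]; exact (Nat.div_add_mod N M).symm
  have hstep : cnt S N = q * c + cnt S r := by
    rw [hN]; exact cnt_periodic_mul_add hM hper q r
  have hsr : cnt S r ≤ r := cnt_le_self S r
  rw [hstep, hN]
  have hexp : ((q * c + cnt S r : ℕ) : ℝ) - (c:ℝ)/M * ((q * M + r : ℕ):ℝ)
      = (cnt S r : ℝ) - (c:ℝ)/M * r := by
    push_cast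
    field_simp
    ring
  rw [hexp]
  rw [abs_le]
  constructor
  · have h1 : (c:ℝ)/M * r ≤ M := by
      have hcle : (c:ℝ)/M ≤ 1 := by
        rw [div_le_one hMR]; exact_mod_cast hcM
      have hrle : (r:ℝ) ≤ M := by exact_mod_cast hr.le
      calc (c:ℝ)/M * r ≤ 1 * M := by
            apply mul_le_mul hcle hrle (by positivity) (by norm_num)
        _ = M := by ring
    have : (0:ℝ) ≤ (cnt S r : ℝ) := by positivity
    linarith
  · have h2 : (cnt S r : ℝ) ≤ M := by
      have : (cnt S r : ℝ) ≤ r := by exact_mod_cast hsr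
      have : (r:ℝ) ≤ M := by exact_mod_cast hr.le
      linarith [ (show (cnt S r:ℝ) ≤ r by exact_mod_cast hsr) ]
    have : (0:ℝ) ≤ (c:ℝ)/M * r := by positivity
    linarith

lemma periodic_hasDensity (hM : 1 ≤ M) (hper : ∀ n, 1 ≤ n → (n ∈ S ↔ n + M ∈ S)) :
    HasDensity S ((cnt S M : ℝ) / M) := by
  set D := (cnt S M : ℝ) / M
  rw [HasDensity]
  have key : ∀ N : ℕ, 1 ≤ N → |(cnt S N : ℝ)/N - D| ≤ M / N := by
    intro N hN
    have hNR : (0:ℝ) < N := by exact_mod_cast hN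
    have := cnt_periodic_bound hM hper N
    have heq : (cnt S N : ℝ)/N - D = ((cnt S N : ℝ) - D * N)/N := by field_simp
    rw [heq, abs_div, abs_of_pos hNR, div_le_div_iff_of_pos_right hNR]
    calc |(cnt S N:ℝ) - D * N| = |(cnt S N : ℝ) - (cnt S M : ℝ)/M * N| := by rfl
      _ ≤ M := this
  rw [Metric.tendsto_atTop]
  intro ε hε
  obtain ⟨N₀, hN₀⟩ := (Metric.tendsto_atTop.1 (tendsto_const_div_atTop_nhds_zero_nat (M:ℝ))) ε hε
  refine ⟨max N₀ 1, fun N hN => ?_⟩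
  have h1 : 1 ≤ N := le_trans (le_max_right _ _) hN
  have h2 := hN₀ N (le_trans (le_max_left _ _) hN)
  rw [Real.dist_eq] at *
  have hpos : (0:ℝ) ≤ (M:ℝ)/N := by positivity
  calc |(cnt S N : ℝ)/N - D| ≤ M/N := key N h1
    _ = |(M:ℝ)/N - 0| := by rw [sub_zero, abs_of_nonneg hpos]
    _ < ε := h2

end Periodic

section Tails

lemma tail_small {ι : Type*} (f : ι → ℝ) (hf : Summable f) (h0 : ∀ i, 0 ≤ f i)
    {ε : ℝ} (hε : 0 < ε) :
    ∃ s₀ : Finset ι, ∀ F : Finset ι, (∀ i ∈ F, i ∉ s₀) → ∑ i ∈ F, f i ≤ ε := by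
  classical
  have h := tendsto_tsum_compl_atTop_zero f
  rw [Metric.tendsto_atTop] at h
  obtain ⟨s₀, hs₀⟩ := h ε hε
  refine ⟨s₀, fun F hF => ?_⟩
  have h1 := hs₀ s₀ le_rfl
  rw [Real.dist_eq, sub_zero] at h1
  have hsub : ∑' (a : {x // x ∉ s₀}), f ↑a = ∑' i, Set.indicator {x | x ∉ s₀} f i :=
    tsum_subtype {x | x ∉ s₀} f
  have hsummable : Summable (Set.indicator {x : ι | x ∉ s₀} f) := hf.indicator _
  have h2 : ∑ i ∈ F, f i ≤ ∑' i, Set.indicator {x | x ∉ s₀} f i := by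
    have heq : ∑ i ∈ F, f i = ∑ i ∈ F, Set.indicator {x | x ∉ s₀} f i := by
      refine Finset.sum_congr rfl (fun i hi => ?_)
      exact (Set.indicator_of_mem (show i ∈ {x : ι | x ∉ s₀} from hF i hi) f).symm
    rw [heq]
    exact Summable.sum_le_tsum F (fun i _ => Set.indicator_nonneg (fun j _ => h0 j) i) hsummable
  have h3 : ∑' i, Set.indicator {x | x ∉ s₀} f i ≤ |∑' (a : {x // x ∉ s₀}), f ↑a| := by
    rw [hsub]
    exact le_abs_self _
  linarith

lemma thin_summable_indicator {B : Set ℕ} (h : Summable fun a : B => (1:ℝ)/a) :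
    Summable (Set.indicator B (fun a : ℕ => (1:ℝ)/a)) := by
  have h2 : Summable (((fun a : ℕ => (1:ℝ)/a)) ∘ (Subtype.val : B → ℕ)) := h
  exact summable_subtype_iff_indicator.mp h2

lemma w2_pointwise (p k : ℕ) (hp : 2 ≤ p) (hk : 2 ≤ k) :
    ((p:ℝ)^k)⁻¹ ≤ (4*((p:ℝ)^2)⁻¹) * ((2:ℝ)⁻¹)^k := by
  have hnat : p^2 * 2^k ≤ 4 * p^k := by
    obtain ⟨j, rfl⟩ : ∃ j, k = j + 2 := ⟨k - 2, by omega⟩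
    rw [pow_add, pow_add]
    have := Nat.pow_le_pow_left hp j
    nlinarith
  have hpR : (2:ℝ) ≤ (p:ℝ) := by exact_mod_cast hp
  have h1 : (0:ℝ) < (p:ℝ)^k := by positivity
  have h2 : (0:ℝ) < (p:ℝ)^2 * 2^k := by positivity
  rw [inv_pow]
  rw [show (4*((p:ℝ)^2)⁻¹) * ((2:ℝ)^k)⁻¹ = 4 / ((p:ℝ)^2 * 2^k) by
    rw [mul_assoc, ← mul_inv, div_eq_mul_inv]]
  rw [inv_eq_one_div, div_le_div_iff₀ h1 h2]
  have hc : ((p^2 * 2^k : ℕ) : ℝ) ≤ ((4 * p^k : ℕ) : ℝ) := by exact_mod_cast hnat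
  push_cast at hc
  linarith

end Tails

lemma w2_summable :
    Summable (fun pk : ℕ × ℕ => if 2 ≤ pk.1 ∧ 2 ≤ pk.2 then ((pk.1:ℝ)^pk.2)⁻¹ else 0) := by
  have hF : Summable (fun p : ℕ => 4*((p:ℝ)^2)⁻¹) := by
    have := (Real.summable_one_div_nat_pow (p := 2)).2 (by norm_num)
    have h2 : Summable (fun n : ℕ => ((n:ℝ)^2)⁻¹) := this.congr (fun n => by rw [one_div])
    exact h2.mul_left 4
  have hG : Summable (fun k : ℕ => ((2:ℝ)⁻¹)^k) :=
    summable_geometric_of_lt_one (by norm_num) (by norm_num)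
  have hprod : Summable (fun pk : ℕ × ℕ => (4*((pk.1:ℝ)^2)⁻¹) * ((2:ℝ)⁻¹)^pk.2) :=
    hF.mul_of_nonneg hG (fun p => by positivity) (fun k => by positivity)
  refine Summable.of_nonneg_of_le (fun pk => by positivity) (fun pk => ?_) hprod
  by_cases h : 2 ≤ pk.1 ∧ 2 ≤ pk.2
  · rw [if_pos h]
    exact w2_pointwise pk.1 pk.2 h.1 h.2
  · rw [if_neg h]
    positivity


def STs (A P : Set ℕ) (K : ℕ → Set ℕ) (T : ℕ) : Set ℕ :=
  {n | 0 < n ∧ (∀ a ∈ A, a ≤ T → ¬ a ∣ n) ∧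
    ∀ p ∈ P, p ≤ T → ∀ k ∈ K p, k ≤ T → ¬ (p ^ k ∣ n ∧ ¬ p ^ (k + 1) ∣ n)}

lemma dvd_shift_iff {d M n : ℕ} (hd : d ∣ M) : d ∣ n ↔ d ∣ n + M := by
  constructor
  · intro h; exact dvd_add h hd
  · intro h
    have := Nat.dvd_sub h hd
    simpa using this

lemma STs_periodic (A P : Set ℕ) (hA0 : 0 ∉ A) (K : ℕ → Set ℕ)
    (hP : ∀ p ∈ P, Nat.Prime p) (T : ℕ) :
    ∀ n, 1 ≤ n → (n ∈ STs A P K T ↔ n + (T.factorial)^(T+1) ∈ STs A P K T) := by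
  intro n hn
  set M := (T.factorial)^(T+1) with hM
  have hMpos : 1 ≤ M := Nat.one_le_pow _ _ T.factorial_pos
  have hdvdA : ∀ a ∈ A, a ≤ T → a ∣ M := by
    intro a ha haT
    have ha1 : 1 ≤ a := Nat.one_le_iff_ne_zero.2 (fun h => hA0 (h ▸ ha))
    exact dvd_trans (Nat.dvd_factorial ha1 haT) (dvd_pow_self _ (Nat.succ_ne_zero T))
  have hdvdP : ∀ p ∈ P, p ≤ T → ∀ j, j ≤ T + 1 → p ^ j ∣ M := by
    intro p hp hpT j hj
    have hp1 : 1 ≤ p := (hP p hp).pos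
    have h1 : p ∣ T.factorial := Nat.dvd_factorial hp1 hpT
    have h2 : p ^ (T+1) ∣ M := pow_dvd_pow_of_dvd h1 (T+1)
    exact dvd_trans (pow_dvd_pow p hj) h2
  simp only [STs, Set.mem_setOf_eq]
  constructor
  · rintro ⟨h1, h2, h3⟩
    refine ⟨by omega, fun a ha haT hd => h2 a ha haT ((dvd_shift_iff (hdvdA a ha haT)).2 hd),
      fun p hp hpT k hk hkT hc => h3 p hp hpT k hk hkT ?_⟩
    exact ⟨(dvd_shift_iff (hdvdP p hp hpT k (by omega))).2 hc.1,
      fun hx => hc.2 ((dvd_shift_iff (hdvdP p hp hpT (k+1) (by omega))).1 hx)⟩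
  · rintro ⟨h1, h2, h3⟩
    refine ⟨hn, fun a ha haT hd => h2 a ha haT ((dvd_shift_iff (hdvdA a ha haT)).1 hd),
      fun p hp hpT k hk hkT hc => h3 p hp hpT k hk hkT ?_⟩
    exact ⟨(dvd_shift_iff (hdvdP p hp hpT k (by omega))).1 hc.1,
      fun hx => hc.2 ((dvd_shift_iff (hdvdP p hp hpT (k+1) (by omega))).2 hx)⟩

def EP (T : ℕ) : Set ℕ := {n | 0 < n ∧ ∀ q, q ≤ T → Nat.Prime q → ¬ q ∣ n}

lemma EP_periodic (T : ℕ) :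
    ∀ n, 1 ≤ n → (n ∈ EP T ↔ n + T.factorial ∈ EP T) := by
  intro n hn
  have hdvd : ∀ q, q ≤ T → Nat.Prime q → q ∣ T.factorial :=
    fun q hqT hq => Nat.dvd_factorial hq.pos hqT
  simp only [EP, Set.mem_setOf_eq]
  constructor
  · rintro ⟨h1, h2⟩
    exact ⟨by omega, fun q hqT hq hd => h2 q hqT hq ((dvd_shift_iff (hdvd q hqT hq)).2 hd)⟩
  · rintro ⟨h1, h2⟩
    exact ⟨hn, fun q hqT hq hd => h2 q hqT hq ((dvd_shift_iff (hdvd q hqT hq)).1 hd)⟩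

lemma one_mem_EP (T : ℕ) : 1 ∈ EP T := by
  refine ⟨by norm_num, fun q hqT hq hd => ?_⟩
  have := Nat.eq_one_of_dvd_one hd
  exact hq.one_lt.ne' this

lemma cnt_EP_pos (T : ℕ) : 1 ≤ cnt (EP T) T.factorial := by
  classical
  rw [cnt_eq_card_s2]
  rw [Nat.one_le_iff_ne_zero, ← Nat.pos_iff_ne_zero, Finset.card_pos]
  exact ⟨1, Finset.mem_filter.2 ⟨Finset.mem_Icc.2 ⟨le_refl 1, T.factorial_pos⟩, one_mem_EP T⟩⟩

lemma EP_div_mem {T m n : ℕ} (hn : n ∈ EP T) (hm : m ∣ n) : n / m ∈ EP T := by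
  obtain ⟨h1, h2⟩ := hn
  have hd : n / m ∣ n := Nat.div_dvd_of_dvd hm
  have hm0 : 0 < m := by
    rcases Nat.eq_zero_or_pos m with h | h
    · subst h; simp at hm; omega
    · exact h
  refine ⟨Nat.div_pos (Nat.le_of_dvd h1 hm) hm0, fun q hqT hq hdq => ?_⟩
  exact h2 q hqT hq (hdq.trans hd)


def Sv (A P : Set ℕ) (K : ℕ → Set ℕ) : Set ℕ :=
  {n : ℕ | 0 < n ∧ (∀ a ∈ A, ¬ a ∣ n) ∧
    ∀ p ∈ P, ∀ k ∈ K p, ¬ (p ^ k ∣ n ∧ ¬ p ^ (k + 1) ∣ n)}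


set_option maxHeartbeats 2000000 in
theorem sieve_by_divisors_and_exact_prime_powers
    (A : Set ℕ) (hA0 : 0 ∉ A)
    (P : Set ℕ) (hP : ∀ p ∈ P, Nat.Prime p)
    (K : ℕ → Set ℕ)
    (hthin : Thin (A ∪ {p | p ∈ P ∧ 1 ∈ K p})) :
    ∃ d : ℝ,
      HasDensity {n : ℕ | 0 < n ∧ (∀ a ∈ A, ¬ a ∣ n) ∧
        ∀ p ∈ P, ∀ k ∈ K p, ¬ (p ^ k ∣ n ∧ ¬ p ^ (k + 1) ∣ n)} d ∧
      ((∀ p ∈ P, 0 ∉ K p) → 1 ∉ A → 0 < d) := by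
  classical
  have hw1 : Summable (Set.indicator (A ∪ {p | p ∈ P ∧ 1 ∈ K p}) fun a : ℕ => (1:ℝ)/a) :=
    thin_summable_indicator hthin
  set w1 := Set.indicator (A ∪ {p | p ∈ P ∧ 1 ∈ K p}) fun a : ℕ => (1:ℝ)/a with hw1def
  have hw1nn : ∀ i, 0 ≤ w1 i := fun i => Set.indicator_nonneg (fun j _ => by positivity) i
  set w2 := fun pk : ℕ × ℕ => if 2 ≤ pk.1 ∧ 2 ≤ pk.2 then ((pk.1:ℝ)^pk.2)⁻¹ else 0 with hw2def
  have hw2s : Summable w2 := w2_summable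
  have hw2nn : ∀ i, 0 ≤ w2 i := fun i => by
    rw [hw2def]; dsimp only; split <;> positivity
  have hw1A : ∀ a ∈ A, w1 a = 1/(a:ℝ) := fun a ha =>
    Set.indicator_of_mem (Set.mem_union_left _ ha) _
  have hw1P : ∀ p ∈ P, 1 ∈ K p → w1 p = 1/(p:ℝ) := fun p hp h1 =>
    Set.indicator_of_mem (Set.mem_union_right _ (show p ∈ {p : ℕ | p ∈ P ∧ 1 ∈ K p} from ⟨hp, h1⟩)) _
  show ∃ d : ℝ, HasDensity (Sv A P K) d ∧ ((∀ p ∈ P, 0 ∉ K p) → 1 ∉ A → 0 < d)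
  by_cases hfin : {p | p ∈ P ∧ 0 ∈ K p}.Finite
  swap
  · -- infinitely many primes p with 0 ∈ K p : density 0
    have hinf : {p | p ∈ P ∧ 0 ∈ K p}.Infinite := hfin
    refine ⟨0, ?_, ?_⟩
    · rw [HasDensity, Metric.tendsto_atTop]
      intro ε hε
      obtain ⟨m, hm⟩ : ∃ m : ℕ, ((1:ℝ)/2)^m < ε := exists_pow_lt_of_lt_one hε (by norm_num)
      obtain ⟨t, hts, htc⟩ := hinf.exists_subset_card_eq m
      have htp : ∀ p ∈ t, Nat.Prime p := fun p hp' => hP p (hts hp').1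
      set Q := ∏ p ∈ t, p with hQ
      have hQdvd : ∀ n ∈ Sv A P K, Q ∣ n := by
        intro n hn
        refine Finset.prod_primes_dvd n (fun p hp' => (htp p hp').prime) (fun p hp' => ?_)
        obtain ⟨hpP, hp0⟩ := hts hp'
        have h3 := hn.2.2 p hpP 0 hp0
        by_contra hnd
        exact h3 ⟨by simp, by simpa using hnd⟩
      have hQ2 : 2^m ≤ Q := by
        have := Finset.pow_card_le_prod t (fun p => p) 2 (fun p hp' => (htp p hp').two_le)
        rwa [htc] at this
      have hQpos : 0 < Q := lt_of_lt_of_le (Nat.pow_pos (n := m) (by norm_num : 0 < 2)) hQ2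
      refine ⟨1, fun N hN => ?_⟩
      have hN1 : (1:ℝ) ≤ (N:ℝ) := by exact_mod_cast hN
      have hc : cnt (Sv A P K) N ≤ N / Q := cnt_dvd_le hQdvd N
      rw [Real.dist_eq, sub_zero, abs_of_nonneg (by positivity)]
      have hQR : (0:ℝ) < (Q:ℝ) := by exact_mod_cast hQpos
      calc (cnt (Sv A P K) N : ℝ)/N ≤ ((N/Q : ℕ):ℝ)/N :=
            div_le_div_of_nonneg_right (by exact_mod_cast hc) (by positivity)
        _ ≤ ((N:ℝ)/Q)/N :=
            div_le_div_of_nonneg_right Nat.cast_div_le (by positivity)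
        _ = 1/Q := by
            rw [div_right_comm, div_self (by positivity : (N:ℝ) ≠ 0)]
        _ ≤ 1/2^m := by
            refine one_div_le_one_div_of_le (by positivity) ?_
            exact_mod_cast hQ2
        _ = ((1:ℝ)/2)^m := by rw [div_pow, one_pow]
        _ < ε := hm
    · intro h0 _
      exfalso
      obtain ⟨p, hp⟩ := hinf.nonempty
      exact h0 p hp.1 hp.2
  · -- main case
    obtain ⟨T₀, hT₀⟩ : ∃ T₀, ∀ p ∈ P, 0 ∈ K p → p ≤ T₀ := by
      refine ⟨hfin.toFinset.sup _root_.id, fun p hp h0 => ?_⟩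
      have hmem : p ∈ hfin.toFinset := (Set.Finite.mem_toFinset hfin).2
        (show p ∈ {p : ℕ | p ∈ P ∧ 0 ∈ K p} from ⟨hp, h0⟩)
      exact Finset.le_sup (f := _root_.id) hmem
    have hsubS : ∀ T, Sv A P K ⊆ STs A P K T := fun T n hn =>
      ⟨hn.1, fun a ha _ => hn.2.1 a ha, fun p hp _ k hk _ => hn.2.2 p hp k hk⟩
    have hSTdens : ∀ T : ℕ, HasDensity (STs A P K T)
        ((cnt (STs A P K T) (T.factorial^(T+1)) : ℝ)/((T.factorial^(T+1) : ℕ) : ℝ)) := fun T =>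
      periodic_hasDensity (Nat.one_le_pow _ _ T.factorial_pos) (STs_periodic A P hA0 K hP T)
    -- the key counting estimate
    have main : ∀ ε : ℝ, 0 < ε → ∃ T : ℕ, 1 ≤ T ∧
        ∀ N : ℕ, 1 ≤ N → (cnt (STs A P K T) N : ℝ) ≤ cnt (Sv A P K) N + N * ε := by
      intro ε hε
      obtain ⟨s₁, hs₁⟩ := tail_small w1 hw1 hw1nn (show (0:ℝ) < ε/3 by positivity)
      obtain ⟨s₂, hs₂⟩ := tail_small w2 hw2s hw2nn (show (0:ℝ) < ε/3 by positivity)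
      set T := max (max T₀ 1) (max (s₁.sup _root_.id) (s₂.sup fun pk => max pk.1 pk.2)) with hTdef
      have hT1 : 1 ≤ T := le_trans (le_max_right T₀ 1) (le_max_left _ _)
      have hTT₀ : T₀ ≤ T := le_trans (le_max_left T₀ 1) (le_max_left _ _)
      have hTs₁ : s₁.sup _root_.id ≤ T := le_trans (le_max_left _ _) (le_max_right _ _)
      have hTs₂ : (s₂.sup fun pk => max pk.1 pk.2) ≤ T := le_trans (le_max_right _ _) (le_max_right _ _)
      refine ⟨T, hT1, ?_⟩
      intro N hN
      set Bad1 : Set ℕ := {n | ∃ a, a ∈ A ∧ T < a ∧ a ∣ n} with hBad1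
      set Bad2 : Set ℕ := {n | ∃ p k, p ∈ P ∧ k ∈ K p ∧ 1 ≤ k ∧ (T < p ∨ T < k) ∧ p ^ k ∣ n} with hBad2
      have hcov : STs A P K T ⊆ Sv A P K ∪ (Bad1 ∪ Bad2) := by
        intro n hn
        by_cases hnS : n ∈ Sv A P K
        · exact Or.inl hnS
        right
        obtain ⟨hn1, hn2, hn3⟩ := hn
        by_cases hX : ∀ a ∈ A, ¬ a ∣ n
        · have hY : ¬ ∀ p ∈ P, ∀ k ∈ K p, ¬(p^k ∣ n ∧ ¬p^(k+1) ∣ n) :=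
            fun hY => hnS ⟨hn1, hX, hY⟩
          push_neg at hY
          obtain ⟨p, hp, k, hk, hdvd1, hdvd2⟩ := hY
          right
          have hk1 : 1 ≤ k := by
            by_contra hk0
            have hk00 : k = 0 := by omega
            subst hk00
            exact hn3 p hp (le_trans (hT₀ p hp hk) hTT₀) 0 hk (Nat.zero_le T) ⟨hdvd1, hdvd2⟩
          have hTpk : T < p ∨ T < k := by
            by_contra hc
            push_neg at hc
            exact hn3 p hp hc.1 k hk hc.2 ⟨hdvd1, hdvd2⟩
          exact ⟨p, k, hp, hk, hk1, hTpk, hdvd1⟩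
        · push_neg at hX
          obtain ⟨a, ha, had⟩ := hX
          left
          have hTa : T < a := by
            by_contra hc
            push_neg at hc
            exact hn2 a ha hc had
          exact ⟨a, ha, hTa, had⟩
      have hsplit : cnt (STs A P K T) N ≤ cnt (Sv A P K) N + (cnt Bad1 N + cnt Bad2 N) := by
        calc cnt (STs A P K T) N ≤ cnt (Sv A P K ∪ (Bad1 ∪ Bad2)) N := cnt_mono hcov N
          _ ≤ cnt (Sv A P K) N + cnt (Bad1 ∪ Bad2) N := cnt_union_le _ _ N
          _ ≤ cnt (Sv A P K) N + (cnt Bad1 N + cnt Bad2 N) := by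
              have := cnt_union_le Bad1 Bad2 N
              omega
      -- Bad1 bound
      set FA := (Finset.Ioc T N).filter (· ∈ A) with hFA
      have hb1 : (cnt Bad1 N : ℝ) ≤ N * (ε/3) := by
        have h1 : cnt Bad1 N ≤ ∑ a ∈ FA, cnt {n | a ∣ n} N := by
          refine cnt_le_sum FA (fun a => {n | a ∣ n}) N ?_
          intro n h1n h2n hn
          obtain ⟨a, ha, hTa, had⟩ := hn
          have haN : a ≤ N := le_trans (Nat.le_of_dvd (by omega) had) h2n
          exact ⟨a, Finset.mem_filter.2 ⟨Finset.mem_Ioc.2 ⟨hTa, haN⟩, ha⟩, had⟩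
        have h2 : ∑ a ∈ FA, cnt {n | a ∣ n} N ≤ ∑ a ∈ FA, N/a :=
          Finset.sum_le_sum (fun a _ => cnt_dvd_le (fun n hn => hn) N)
        have h3 : ((∑ a ∈ FA, N/a : ℕ) : ℝ) ≤ (N:ℝ) * ∑ a ∈ FA, w1 a := by
          push_cast
          rw [Finset.mul_sum]
          refine Finset.sum_le_sum (fun a haF => ?_)
          have haA : a ∈ A := (Finset.mem_filter.1 haF).2
          rw [hw1A a haA, mul_one_div]
          exact Nat.cast_div_le
        have h4 : ∑ a ∈ FA, w1 a ≤ ε/3 := by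
          refine hs₁ FA (fun a haF => ?_)
          intro hmem
          have hTa : T < a := (Finset.mem_Ioc.1 (Finset.mem_filter.1 haF).1).1
          have : a ≤ s₁.sup _root_.id := Finset.le_sup (f := _root_.id) hmem
          omega
        calc (cnt Bad1 N : ℝ) ≤ ((∑ a ∈ FA, N/a : ℕ) : ℝ) := by exact_mod_cast le_trans h1 h2
          _ ≤ (N:ℝ) * ∑ a ∈ FA, w1 a := h3
          _ ≤ N * (ε/3) := by
              have hN0 : (0:ℝ) ≤ N := by positivity
              exact mul_le_mul_of_nonneg_left h4 hN0
      -- Bad2 bound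
      set FPK := ((Finset.Icc 2 N) ×ˢ (Finset.Icc 1 N)).filter
        (fun pk : ℕ × ℕ => pk.1 ∈ P ∧ pk.2 ∈ K pk.1 ∧ (T < pk.1 ∨ T < pk.2)) with hFPK
      have hb2 : (cnt Bad2 N : ℝ) ≤ N * (ε/3) + N * (ε/3) := by
        have h1 : cnt Bad2 N ≤ ∑ pk ∈ FPK, cnt {n | pk.1 ^ pk.2 ∣ n} N := by
          refine cnt_le_sum FPK (fun pk => {n | pk.1 ^ pk.2 ∣ n}) N ?_
          intro n h1n h2n hn
          obtain ⟨p, k, hp, hk, hk1, hTpk, hdvd⟩ := hn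
          have hp2 : 2 ≤ p := (hP p hp).two_le
          have hpkN : p^k ≤ N := le_trans (Nat.le_of_dvd (by omega) hdvd) h2n
          have hpN : p ≤ N := le_trans (Nat.le_self_pow (by omega) p) hpkN
          have hkN : k ≤ N := by
            have h2k : 2^k ≤ p^k := Nat.pow_le_pow_left hp2 k
            have := Nat.lt_two_pow_self (n := k)
            omega
          exact ⟨(p, k), Finset.mem_filter.2 ⟨Finset.mem_product.2
            ⟨Finset.mem_Icc.2 ⟨hp2, hpN⟩, Finset.mem_Icc.2 ⟨hk1, hkN⟩⟩, hp, hk, hTpk⟩, hdvd⟩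
        have h2 : ((∑ pk ∈ FPK, cnt {n | pk.1 ^ pk.2 ∣ n} N : ℕ) : ℝ)
            ≤ ∑ pk ∈ FPK, (N:ℝ) * (1/((pk.1:ℝ)^pk.2)) := by
          push_cast
          refine Finset.sum_le_sum (fun pk _ => ?_)
          have := cnt_dvd_le (A := {n | pk.1 ^ pk.2 ∣ n}) (m := pk.1^pk.2) (fun n hn => hn) N
          calc (cnt {n | pk.1 ^ pk.2 ∣ n} N : ℝ) ≤ ((N / pk.1^pk.2 : ℕ) : ℝ) := by exact_mod_cast this
            _ ≤ (N:ℝ)/((pk.1:ℝ)^pk.2) := by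
                have := Nat.cast_div_le (α := ℝ) (m := N) (n := pk.1^pk.2)
                push_cast at this
                exact this
            _ = (N:ℝ) * (1/((pk.1:ℝ)^pk.2)) := by rw [mul_one_div]
        have hsum : ∑ pk ∈ FPK, (N:ℝ) * (1/((pk.1:ℝ)^pk.2))
            = (∑ pk ∈ FPK.filter (fun pk => pk.2 = 1), (N:ℝ) * (1/((pk.1:ℝ)^pk.2)))
            + ∑ pk ∈ FPK.filter (fun pk => ¬ pk.2 = 1), (N:ℝ) * (1/((pk.1:ℝ)^pk.2)) :=
          (Finset.sum_filter_add_sum_filter_not FPK _ _).symm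
        have hpart1 : ∑ pk ∈ FPK.filter (fun pk => pk.2 = 1), (N:ℝ) * (1/((pk.1:ℝ)^pk.2))
            ≤ N * (ε/3) := by
          have he : ∑ pk ∈ FPK.filter (fun pk => pk.2 = 1), (N:ℝ) * (1/((pk.1:ℝ)^pk.2))
              = ∑ pk ∈ FPK.filter (fun pk => pk.2 = 1), (N:ℝ) * w1 pk.1 := by
            refine Finset.sum_congr rfl (fun pk hpk => ?_)
            have h2 := Finset.mem_filter.1 hpk
            have hk1 : pk.2 = 1 := h2.2
            obtain ⟨hpP, hkK, -⟩ := (Finset.mem_filter.1 h2.1).2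
            rw [hk1] at hkK ⊢
            rw [hw1P pk.1 hpP hkK, pow_one]
          rw [he, ← Finset.mul_sum]
          have h4 : ∑ pk ∈ FPK.filter (fun pk => pk.2 = 1), w1 pk.1
              = ∑ p ∈ (FPK.filter (fun pk => pk.2 = 1)).image Prod.fst, w1 p := by
            rw [Finset.sum_image]
            intro x hx y hy hxy
            have hx2 : x.2 = 1 := (Finset.mem_filter.1 hx).2
            have hy2 : y.2 = 1 := (Finset.mem_filter.1 hy).2
            exact Prod.ext hxy (hx2.trans hy2.symm)
          have h5 : ∑ p ∈ (FPK.filter (fun pk => pk.2 = 1)).image Prod.fst, w1 p ≤ ε/3 := by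
            refine hs₁ _ (fun p hpF => ?_)
            obtain ⟨pk, hpk, rfl⟩ := Finset.mem_image.1 hpF
            have h2 := Finset.mem_filter.1 hpk
            obtain ⟨-, -, hTpk⟩ := (Finset.mem_filter.1 h2.1).2
            have hTp : T < pk.1 := by
              rcases hTpk with h | h
              · exact h
              · rw [h2.2] at h; omega
            intro hmem
            have : pk.1 ≤ s₁.sup _root_.id := Finset.le_sup (f := _root_.id) hmem
            omega
          rw [h4]
          have hN0 : (0:ℝ) ≤ N := by positivity
          exact mul_le_mul_of_nonneg_left h5 hN0
        have hpart2 : ∑ pk ∈ FPK.filter (fun pk => ¬ pk.2 = 1), (N:ℝ) * (1/((pk.1:ℝ)^pk.2))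
            ≤ N * (ε/3) := by
          have he : ∑ pk ∈ FPK.filter (fun pk => ¬ pk.2 = 1), (N:ℝ) * (1/((pk.1:ℝ)^pk.2))
              = ∑ pk ∈ FPK.filter (fun pk => ¬ pk.2 = 1), (N:ℝ) * w2 pk := by
            refine Finset.sum_congr rfl (fun pk hpk => ?_)
            have h2 := Finset.mem_filter.1 hpk
            have hmm := Finset.mem_product.1 (Finset.mem_filter.1 h2.1).1
            have hp2 : 2 ≤ pk.1 := (Finset.mem_Icc.1 hmm.1).1
            have hk2 : 2 ≤ pk.2 := by
              have := (Finset.mem_Icc.1 hmm.2).1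
              have := h2.2
              omega
            have hw2v : w2 pk = ((pk.1:ℝ)^pk.2)⁻¹ := by
              simp only [hw2def]
              exact if_pos ⟨hp2, hk2⟩
            rw [hw2v, one_div]
          rw [he, ← Finset.mul_sum]
          have h5 : ∑ pk ∈ FPK.filter (fun pk => ¬ pk.2 = 1), w2 pk ≤ ε/3 := by
            refine hs₂ _ (fun pk hpF => ?_)
            have h2 := Finset.mem_filter.1 hpF
            obtain ⟨-, -, hTpk⟩ := (Finset.mem_filter.1 h2.1).2
            intro hmem
            have : max pk.1 pk.2 ≤ s₂.sup (fun pk => max pk.1 pk.2) :=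
              Finset.le_sup (f := fun pk : ℕ × ℕ => max pk.1 pk.2) hmem
            rcases hTpk with h | h <;> omega
          have hN0 : (0:ℝ) ≤ N := by positivity
          exact mul_le_mul_of_nonneg_left h5 hN0
        calc (cnt Bad2 N : ℝ) ≤ ((∑ pk ∈ FPK, cnt {n | pk.1 ^ pk.2 ∣ n} N : ℕ) : ℝ) := by
              exact_mod_cast h1
          _ ≤ ∑ pk ∈ FPK, (N:ℝ) * (1/((pk.1:ℝ)^pk.2)) := h2
          _ ≤ N * (ε/3) + N * (ε/3) := by rw [hsum]; exact add_le_add hpart1 hpart2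
      have : (cnt (STs A P K T) N : ℝ) ≤ (cnt (Sv A P K) N : ℝ) + ((cnt Bad1 N : ℝ) + (cnt Bad2 N : ℝ)) := by
        exact_mod_cast hsplit
      calc (cnt (STs A P K T) N : ℝ)
          ≤ (cnt (Sv A P K) N : ℝ) + ((cnt Bad1 N : ℝ) + (cnt Bad2 N : ℝ)) := this
        _ ≤ (cnt (Sv A P K) N : ℝ) + (N * (ε/3) + (N * (ε/3) + N * (ε/3))) := by
            have := add_le_add hb1 hb2
            linarith
        _ = (cnt (Sv A P K) N : ℝ) + N * ε := by ring
    -- from `main` to convergence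
    set g := fun N : ℕ => (cnt (Sv A P K) N : ℝ)/N with hg
    have gK : ∀ ε : ℝ, 0 < ε → ∃ D : ℝ, ∀ᶠ N in Filter.atTop, |g N - D| ≤ ε := by
      intro ε hε
      obtain ⟨T, hT1, hcnt⟩ := main (ε/2) (by positivity)
      set D := (cnt (STs A P K T) (T.factorial^(T+1)) : ℝ)/((T.factorial^(T+1) : ℕ) : ℝ) with hD
      refine ⟨D, ?_⟩
      have hten := hSTdens T
      rw [HasDensity, Metric.tendsto_atTop] at hten
      obtain ⟨N₀, hN₀⟩ := hten (ε/2) (by positivity)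
      rw [Filter.eventually_atTop]
      refine ⟨max N₀ 1, fun N hN => ?_⟩
      have hN1 : 1 ≤ N := le_trans (le_max_right _ _) hN
      have hNR : (0:ℝ) < N := by exact_mod_cast hN1
      have hST := hN₀ N (le_trans (le_max_left _ _) hN)
      rw [Real.dist_eq] at hST
      have hle : g N ≤ (cnt (STs A P K T) N : ℝ)/N := by
        simp only [hg]
        exact div_le_div_of_nonneg_right (by exact_mod_cast cnt_mono (hsubS T) N) (by positivity)
      have hge : (cnt (STs A P K T) N : ℝ)/N - ε/2 ≤ g N := by
        have hh := hcnt N hN1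
        simp only [hg]
        rw [div_sub' (ne_of_gt hNR), div_le_div_iff_of_pos_right hNR]
        nlinarith
      rw [abs_le]
      rw [abs_lt] at hST
      constructor <;> nlinarith
    have hcauchy : CauchySeq g := by
      rw [Metric.cauchySeq_iff]
      intro ε hε
      obtain ⟨D, hev⟩ := gK (ε/3) (by positivity)
      rw [Filter.eventually_atTop] at hev
      obtain ⟨N₀, hN₀⟩ := hev
      refine ⟨N₀, fun m hm n hn => ?_⟩
      have h1 := hN₀ m hm
      have h2 := hN₀ n hn
      rw [Real.dist_eq]
      have h3 : |g m - g n| ≤ |g m - D| + |D - g n| := abs_sub_le _ _ _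
      rw [abs_sub_comm D (g n)] at h3
      linarith
    obtain ⟨d, hd⟩ := cauchySeq_tendsto_of_complete hcauchy
    refine ⟨d, hd, ?_⟩
    intro h0 h1A
    obtain ⟨s₁, hs₁⟩ := tail_small w1 hw1 hw1nn (show (0:ℝ) < 1/8 by norm_num)
    obtain ⟨s₂, hs₂⟩ := tail_small w2 hw2s hw2nn (show (0:ℝ) < 1/8 by norm_num)
    set T := max 1 (max (s₁.sup _root_.id) (s₂.sup fun pk => max pk.1 pk.2)) with hTdef
    have hT1 : 1 ≤ T := le_max_left 1 _
    have hTs₁ : s₁.sup _root_.id ≤ T := le_trans (le_max_left _ _) (le_max_right _ _)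
    have hTs₂ : (s₂.sup fun pk => max pk.1 pk.2) ≤ T := le_trans (le_max_right _ _) (le_max_right _ _)
    set M' := T.factorial with hM'def
    have hM'1 : 1 ≤ M' := T.factorial_pos
    have hM'R : (0:ℝ) < (M':ℝ) := by exact_mod_cast hM'1
    have hper := EP_periodic T
    set D := (cnt (EP T) M' : ℝ)/(M' : ℝ) with hDdef
    have hD0 : 0 < D := div_pos (by exact_mod_cast cnt_EP_pos T) hM'R
    have hEb : ∀ N : ℕ, |(cnt (EP T) N : ℝ) - D * (N:ℝ)| ≤ (M':ℝ) := by
      intro N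
      have hh := cnt_periodic_bound hM'1 hper N
      rw [hDdef]
      exact hh
    obtain ⟨s₁', hs₁'⟩ := tail_small w1 hw1 hw1nn (show (0:ℝ) < D/16 by positivity)
    obtain ⟨s₂', hs₂'⟩ := tail_small w2 hw2s hw2nn (show (0:ℝ) < D/16 by positivity)
    set f := max T (max (s₁'.sup _root_.id) (s₂'.sup fun pk => max pk.1 pk.2)) with hfdef
    have hTf : T ≤ f := le_max_left _ _
    have hfs₁ : s₁'.sup _root_.id ≤ f := le_trans (le_max_left _ _) (le_max_right _ _)
    have hfs₂ : (s₂'.sup fun pk => max pk.1 pk.2) ≤ f := le_trans (le_max_right _ _) (le_max_right _ _)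
    set Cst := (1 + (f:ℝ) + ((f:ℝ)+1)^2) * (M':ℝ) with hCstdef
    have key : ∀ N : ℕ, 1 ≤ N → D * (N:ℝ) * (7/16) - Cst ≤ (cnt (Sv A P K) N : ℝ) := by
      intro N hN
      set BadE1 : Set ℕ := {n | n ∈ EP T ∧ ∃ a, a ∈ A ∧ T < a ∧ a ∣ n} with hBadE1
      set BadE2 : Set ℕ := {n | n ∈ EP T ∧ ∃ p k, p ∈ P ∧ k ∈ K p ∧ 1 ≤ k ∧ T < p ∧ p ^ k ∣ n} with hBadE2
      have hcov : EP T ⊆ Sv A P K ∪ (BadE1 ∪ BadE2) := by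
        intro n hn
        by_cases hnS : n ∈ Sv A P K
        · exact Or.inl hnS
        right
        obtain ⟨hn1, hn2⟩ := hn
        by_cases hX : ∀ a ∈ A, ¬ a ∣ n
        · have hY : ¬ ∀ p ∈ P, ∀ k ∈ K p, ¬(p^k ∣ n ∧ ¬p^(k+1) ∣ n) :=
            fun hY => hnS ⟨hn1, hX, hY⟩
          push_neg at hY
          obtain ⟨p, hp, k, hk, hdvd1, hdvd2⟩ := hY
          right
          have hk1 : 1 ≤ k := by
            rcases Nat.eq_zero_or_pos k with hk0 | hk0
            · subst hk0; exact absurd hk (h0 p hp)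
            · exact hk0
          have hTp : T < p := by
            by_contra hc
            push_neg at hc
            exact hn2 p hc (hP p hp) (dvd_trans (dvd_pow_self p (by omega)) hdvd1)
          exact ⟨⟨hn1, hn2⟩, p, k, hp, hk, hk1, hTp, hdvd1⟩
        · push_neg at hX
          obtain ⟨a, ha, had⟩ := hX
          left
          have hTa : T < a := by
            by_contra hc
            push_neg at hc
            have ha0 : a ≠ 0 := fun h => hA0 (h ▸ ha)
            have ha1 : a ≠ 1 := fun h => h1A (h ▸ ha)
            have hq := Nat.minFac_prime ha1
            have hqa : a.minFac ≤ a := Nat.minFac_le (by omega)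
            exact hn2 a.minFac (le_trans hqa hc) hq (dvd_trans (Nat.minFac_dvd a) had)
          exact ⟨⟨hn1, hn2⟩, a, ha, hTa, had⟩
      have hsplit : cnt (EP T) N ≤ cnt (Sv A P K) N + (cnt BadE1 N + cnt BadE2 N) := by
        calc cnt (EP T) N ≤ cnt (Sv A P K ∪ (BadE1 ∪ BadE2)) N := cnt_mono hcov N
          _ ≤ cnt (Sv A P K) N + cnt (BadE1 ∪ BadE2) N := cnt_union_le _ _ N
          _ ≤ cnt (Sv A P K) N + (cnt BadE1 N + cnt BadE2 N) := by
              have := cnt_union_le BadE1 BadE2 N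
              omega
      have hrel : ∀ m : ℕ, 1 ≤ m → (cnt {n | n ∈ EP T ∧ m ∣ n} N : ℝ) ≤ D * ((N:ℝ) * (1/(m:ℝ))) + M' := by
        intro m hm
        have h1 : cnt {n | n ∈ EP T ∧ m ∣ n} N ≤ cnt (EP T) (N/m) :=
          cnt_rel_le hm (fun n hn hmn => EP_div_mem hn hmn) N
        have h2 := hEb (N/m)
        rw [abs_le] at h2
        have h3 : (cnt {n | n ∈ EP T ∧ m ∣ n} N : ℝ) ≤ D * (((N/m : ℕ)):ℝ) + M' := by
          have hc : (cnt {n | n ∈ EP T ∧ m ∣ n} N :ℝ) ≤ (cnt (EP T) (N/m) : ℝ) := by exact_mod_cast h1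
          linarith [h2.2]
        refine le_trans h3 ?_
        have h4 : ((N/m : ℕ):ℝ) ≤ (N:ℝ)/(m:ℝ) := Nat.cast_div_le
        have h5 : (N:ℝ)/(m:ℝ) = (N:ℝ) * (1/(m:ℝ)) := by rw [mul_one_div]
        nlinarith [hD0.le]
      have hcrude : ∀ m : ℕ, 1 ≤ m → (cnt {n | n ∈ EP T ∧ m ∣ n} N : ℝ) ≤ (N:ℝ) * (1/(m:ℝ)) := by
        intro m hm
        have h1 : cnt {n | n ∈ EP T ∧ m ∣ n} N ≤ N/m :=
          cnt_dvd_le (fun n hn => hn.2) N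
        calc (cnt {n | n ∈ EP T ∧ m ∣ n} N : ℝ) ≤ ((N/m : ℕ):ℝ) := by exact_mod_cast h1
          _ ≤ (N:ℝ)/(m:ℝ) := Nat.cast_div_le
          _ = (N:ℝ) * (1/(m:ℝ)) := by rw [mul_one_div]
      -- BadE1 bound
      have hb1 : (cnt BadE1 N : ℝ) ≤ D*(N:ℝ)*(1/8) + (f:ℝ)*(M':ℝ) + (N:ℝ)*(D/16) := by
        set FA := (Finset.Ioc T N).filter (· ∈ A) with hFA
        have h1 : cnt BadE1 N ≤ ∑ a ∈ FA, cnt {n | n ∈ EP T ∧ a ∣ n} N := by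
          refine cnt_le_sum FA (fun a => {n | n ∈ EP T ∧ a ∣ n}) N ?_
          intro n h1n h2n hn
          obtain ⟨hnE, a, ha, hTa, had⟩ := hn
          have haN : a ≤ N := le_trans (Nat.le_of_dvd (by omega) had) h2n
          exact ⟨a, Finset.mem_filter.2 ⟨Finset.mem_Ioc.2 ⟨hTa, haN⟩, ha⟩, hnE, had⟩
        have hcast : (cnt BadE1 N : ℝ) ≤ ∑ a ∈ FA, ((cnt {n | n ∈ EP T ∧ a ∣ n} N : ℕ):ℝ) := by
          exact_mod_cast h1
        rw [← Finset.sum_filter_add_sum_filter_not FA (fun a => a ≤ f)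
          (fun a => ((cnt {n | n ∈ EP T ∧ a ∣ n} N : ℕ):ℝ))] at hcast
        have hbr1 : ∑ a ∈ FA.filter (fun a => a ≤ f), ((cnt {n | n ∈ EP T ∧ a ∣ n} N : ℕ):ℝ)
            ≤ D*(N:ℝ)*(1/8) + (f:ℝ)*(M':ℝ) := by
          have e1 : ∀ a ∈ FA.filter (fun a => a ≤ f),
              ((cnt {n | n ∈ EP T ∧ a ∣ n} N : ℕ):ℝ) ≤ D*(N:ℝ)*(w1 a) + M' := by
            intro a haF
            have haA : a ∈ A := (Finset.mem_filter.1 (Finset.mem_filter.1 haF).1).2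
            have hTa : T < a := (Finset.mem_Ioc.1 (Finset.mem_filter.1 (Finset.mem_filter.1 haF).1).1).1
            have := hrel a (by omega)
            rw [hw1A a haA]
            calc ((cnt {n | n ∈ EP T ∧ a ∣ n} N : ℕ):ℝ) ≤ D * ((N:ℝ) * (1/(a:ℝ))) + M' := this
              _ = D*(N:ℝ)*(1/(a:ℝ)) + M' := by ring
          calc ∑ a ∈ FA.filter (fun a => a ≤ f), ((cnt {n | n ∈ EP T ∧ a ∣ n} N : ℕ):ℝ)
              ≤ ∑ a ∈ FA.filter (fun a => a ≤ f), (D*(N:ℝ)*(w1 a) + M') := Finset.sum_le_sum e1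
            _ = D*(N:ℝ)*(∑ a ∈ FA.filter (fun a => a ≤ f), w1 a)
                + ((FA.filter (fun a => a ≤ f)).card : ℝ) * (M':ℝ) := by
                rw [Finset.sum_add_distrib, ← Finset.mul_sum, Finset.sum_const, nsmul_eq_mul]
            _ ≤ D*(N:ℝ)*(1/8) + (f:ℝ)*(M':ℝ) := by
                have hw : ∑ a ∈ FA.filter (fun a => a ≤ f), w1 a ≤ 1/8 := by
                  refine hs₁ _ (fun a haF => ?_)
                  have hTa : T < a := (Finset.mem_Ioc.1 (Finset.mem_filter.1 (Finset.mem_filter.1 haF).1).1).1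
                  intro hmem
                  have : a ≤ s₁.sup _root_.id := Finset.le_sup (f := _root_.id) hmem
                  omega
                have hcard : ((FA.filter (fun a => a ≤ f)).card : ℝ) ≤ (f:ℝ) := by
                  have hsub : FA.filter (fun a => a ≤ f) ⊆ Finset.Icc 1 f := by
                    intro a haF
                    have h2 := Finset.mem_filter.1 haF
                    have hTa : T < a := (Finset.mem_Ioc.1 (Finset.mem_filter.1 h2.1).1).1
                    exact Finset.mem_Icc.2 ⟨by omega, h2.2⟩
                  have := Finset.card_le_card hsub
                  rw [Nat.card_Icc] at this
                  exact_mod_cast le_trans this (by omega)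
                have hDN : (0:ℝ) ≤ D*(N:ℝ) := by positivity
                have := mul_le_mul_of_nonneg_left hw hDN
                nlinarith [hM'R]
        have hbr2 : ∑ a ∈ FA.filter (fun a => ¬ a ≤ f), ((cnt {n | n ∈ EP T ∧ a ∣ n} N : ℕ):ℝ)
            ≤ (N:ℝ)*(D/16) := by
          have e2 : ∀ a ∈ FA.filter (fun a => ¬ a ≤ f),
              ((cnt {n | n ∈ EP T ∧ a ∣ n} N : ℕ):ℝ) ≤ (N:ℝ)*(w1 a) := by
            intro a haF
            have haA : a ∈ A := (Finset.mem_filter.1 (Finset.mem_filter.1 haF).1).2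
            have hTa : T < a := (Finset.mem_Ioc.1 (Finset.mem_filter.1 (Finset.mem_filter.1 haF).1).1).1
            rw [hw1A a haA]
            exact hcrude a (by omega)
          calc ∑ a ∈ FA.filter (fun a => ¬ a ≤ f), ((cnt {n | n ∈ EP T ∧ a ∣ n} N : ℕ):ℝ)
              ≤ ∑ a ∈ FA.filter (fun a => ¬ a ≤ f), (N:ℝ)*(w1 a) := Finset.sum_le_sum e2
            _ = (N:ℝ) * ∑ a ∈ FA.filter (fun a => ¬ a ≤ f), w1 a := by rw [Finset.mul_sum]
            _ ≤ (N:ℝ)*(D/16) := by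
                have hw : ∑ a ∈ FA.filter (fun a => ¬ a ≤ f), w1 a ≤ D/16 := by
                  refine hs₁' _ (fun a haF => ?_)
                  have hfa : ¬ a ≤ f := (Finset.mem_filter.1 haF).2
                  intro hmem
                  have : a ≤ s₁'.sup _root_.id := Finset.le_sup (f := _root_.id) hmem
                  omega
                have hN0 : (0:ℝ) ≤ (N:ℝ) := by positivity
                exact mul_le_mul_of_nonneg_left hw hN0
        linarith
      -- BadE2 bound
      have hb2 : (cnt BadE2 N : ℝ) ≤ D*(N:ℝ)*(2/8) + (((f:ℝ)+1)^2)*(M':ℝ) + (N:ℝ)*(D/16) + (N:ℝ)*(D/16) := by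
        set FPK := ((Finset.Icc 2 N) ×ˢ (Finset.Icc 1 N)).filter
          (fun pk : ℕ × ℕ => pk.1 ∈ P ∧ pk.2 ∈ K pk.1 ∧ T < pk.1) with hFPK
        have hmemfacts : ∀ pk ∈ FPK, 2 ≤ pk.1 ∧ 1 ≤ pk.2 ∧ pk.1 ∈ P ∧ pk.2 ∈ K pk.1 ∧ T < pk.1 := by
          intro pk hpk
          have h2 := Finset.mem_filter.1 hpk
          have hmm := Finset.mem_product.1 h2.1
          exact ⟨(Finset.mem_Icc.1 hmm.1).1, (Finset.mem_Icc.1 hmm.2).1, h2.2.1, h2.2.2.1, h2.2.2.2⟩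
        have h1 : cnt BadE2 N ≤ ∑ pk ∈ FPK, cnt {n | n ∈ EP T ∧ pk.1 ^ pk.2 ∣ n} N := by
          refine cnt_le_sum FPK (fun pk => {n | n ∈ EP T ∧ pk.1 ^ pk.2 ∣ n}) N ?_
          intro n h1n h2n hn
          obtain ⟨hnE, p, k, hp, hk, hk1, hTp, hdvd⟩ := hn
          have hp2 : 2 ≤ p := (hP p hp).two_le
          have hpkN : p^k ≤ N := le_trans (Nat.le_of_dvd (by omega) hdvd) h2n
          have hpN : p ≤ N := le_trans (Nat.le_self_pow (by omega) p) hpkN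
          have hkN : k ≤ N := by
            have h2k : 2^k ≤ p^k := Nat.pow_le_pow_left hp2 k
            have := Nat.lt_two_pow_self (n := k)
            omega
          exact ⟨(p, k), Finset.mem_filter.2 ⟨Finset.mem_product.2
            ⟨Finset.mem_Icc.2 ⟨hp2, hpN⟩, Finset.mem_Icc.2 ⟨hk1, hkN⟩⟩, hp, hk, hTp⟩, hnE, hdvd⟩
        have hcast : (cnt BadE2 N : ℝ) ≤ ∑ pk ∈ FPK, ((cnt {n | n ∈ EP T ∧ pk.1 ^ pk.2 ∣ n} N : ℕ):ℝ) := by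
          exact_mod_cast h1
        rw [← Finset.sum_filter_add_sum_filter_not FPK (fun pk => max pk.1 pk.2 ≤ f)
          (fun pk => ((cnt {n | n ∈ EP T ∧ pk.1 ^ pk.2 ∣ n} N : ℕ):ℝ))] at hcast
        have hppos : ∀ pk ∈ FPK, 1 ≤ pk.1 ^ pk.2 := by
          intro pk hpk
          have := (hmemfacts pk hpk).1
          exact Nat.one_le_pow _ _ (by omega)
        -- small part
        have hbr1 : ∑ pk ∈ FPK.filter (fun pk => max pk.1 pk.2 ≤ f),
            ((cnt {n | n ∈ EP T ∧ pk.1 ^ pk.2 ∣ n} N : ℕ):ℝ)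
            ≤ D*(N:ℝ)*(2/8) + (((f:ℝ)+1)^2)*(M':ℝ) := by
          set G := FPK.filter (fun pk => max pk.1 pk.2 ≤ f) with hG
          have e1 : ∀ pk ∈ G, ((cnt {n | n ∈ EP T ∧ pk.1 ^ pk.2 ∣ n} N : ℕ):ℝ)
              ≤ D*(N:ℝ)*(1/((pk.1:ℝ)^pk.2)) + M' := by
            intro pk hpk
            have hin : pk ∈ FPK := (Finset.mem_filter.1 hpk).1
            have := hrel (pk.1^pk.2) (hppos pk hin)
            calc ((cnt {n | n ∈ EP T ∧ pk.1 ^ pk.2 ∣ n} N : ℕ):ℝ)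
                ≤ D * ((N:ℝ) * (1/((pk.1^pk.2 : ℕ):ℝ))) + M' := this
              _ = D*(N:ℝ)*(1/((pk.1:ℝ)^pk.2)) + M' := by push_cast; ring
          have hsum1 : ∑ pk ∈ G, (1/((pk.1:ℝ)^pk.2)) ≤ 1/8 + 1/8 := by
            rw [← Finset.sum_filter_add_sum_filter_not G (fun pk => pk.2 = 1)
              (fun pk => (1/((pk.1:ℝ)^pk.2)))]
            have hq1 : ∑ pk ∈ G.filter (fun pk => pk.2 = 1), (1/((pk.1:ℝ)^pk.2)) ≤ 1/8 := by
              have he : ∑ pk ∈ G.filter (fun pk => pk.2 = 1), (1/((pk.1:ℝ)^pk.2))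
                  = ∑ pk ∈ G.filter (fun pk => pk.2 = 1), w1 pk.1 := by
                refine Finset.sum_congr rfl (fun pk hpk => ?_)
                have hin : pk ∈ FPK := (Finset.mem_filter.1 (Finset.mem_filter.1 hpk).1).1
                have hk1 : pk.2 = 1 := (Finset.mem_filter.1 hpk).2
                obtain ⟨-, -, hpP, hkK, -⟩ := hmemfacts pk hin
                rw [hk1] at hkK ⊢
                rw [hw1P pk.1 hpP hkK, pow_one]
              rw [he]
              rw [show ∑ pk ∈ G.filter (fun pk => pk.2 = 1), w1 pk.1
                  = ∑ p ∈ (G.filter (fun pk => pk.2 = 1)).image Prod.fst, w1 p by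
                rw [Finset.sum_image]
                intro x hx y hy hxy
                exact Prod.ext hxy (((Finset.mem_filter.1 hx).2).trans ((Finset.mem_filter.1 hy).2).symm)]
              refine hs₁ _ (fun p hpF => ?_)
              obtain ⟨pk, hpk, rfl⟩ := Finset.mem_image.1 hpF
              have hin : pk ∈ FPK := (Finset.mem_filter.1 (Finset.mem_filter.1 hpk).1).1
              have hTp : T < pk.1 := (hmemfacts pk hin).2.2.2.2
              intro hmem
              have : pk.1 ≤ s₁.sup _root_.id := Finset.le_sup (f := _root_.id) hmem
              omega
            have hq2 : ∑ pk ∈ G.filter (fun pk => ¬ pk.2 = 1), (1/((pk.1:ℝ)^pk.2)) ≤ 1/8 := by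
              have he : ∑ pk ∈ G.filter (fun pk => ¬ pk.2 = 1), (1/((pk.1:ℝ)^pk.2))
                  = ∑ pk ∈ G.filter (fun pk => ¬ pk.2 = 1), w2 pk := by
                refine Finset.sum_congr rfl (fun pk hpk => ?_)
                have hin : pk ∈ FPK := (Finset.mem_filter.1 (Finset.mem_filter.1 hpk).1).1
                obtain ⟨hp2, hk1, -, -, -⟩ := hmemfacts pk hin
                have hk2 : 2 ≤ pk.2 := by
                  have := (Finset.mem_filter.1 hpk).2
                  omega
                have hw2v : w2 pk = ((pk.1:ℝ)^pk.2)⁻¹ := by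
                  simp only [hw2def]
                  exact if_pos ⟨hp2, hk2⟩
                rw [hw2v, one_div]
              rw [he]
              refine hs₂ _ (fun pk hpF => ?_)
              have hin : pk ∈ FPK := (Finset.mem_filter.1 (Finset.mem_filter.1 hpF).1).1
              have hTp : T < pk.1 := (hmemfacts pk hin).2.2.2.2
              intro hmem
              have : max pk.1 pk.2 ≤ s₂.sup (fun pk => max pk.1 pk.2) :=
                Finset.le_sup (f := fun pk : ℕ × ℕ => max pk.1 pk.2) hmem
              omega
            linarith
          have hcard : ((G.card : ℕ) : ℝ) ≤ ((f:ℝ)+1)^2 := by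
            have hsub : G ⊆ Finset.Icc 0 f ×ˢ Finset.Icc 0 f := by
              intro pk hpk
              have hmf : max pk.1 pk.2 ≤ f := (Finset.mem_filter.1 hpk).2
              exact Finset.mem_product.2 ⟨Finset.mem_Icc.2 ⟨by omega, by omega⟩,
                Finset.mem_Icc.2 ⟨by omega, by omega⟩⟩
            have hc2 : G.card ≤ (f+1)*(f+1) := by
              have h := Finset.card_le_card hsub
              simp only [Finset.card_product, Nat.card_Icc, Nat.sub_zero] at h
              exact h
            calc ((G.card : ℕ):ℝ) ≤ (((f+1) * (f+1) : ℕ):ℝ) := by exact_mod_cast hc2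
              _ = ((f:ℝ)+1)^2 := by push_cast; ring
          calc ∑ pk ∈ G, ((cnt {n | n ∈ EP T ∧ pk.1 ^ pk.2 ∣ n} N : ℕ):ℝ)
              ≤ ∑ pk ∈ G, (D*(N:ℝ)*(1/((pk.1:ℝ)^pk.2)) + M') := Finset.sum_le_sum e1
            _ = D*(N:ℝ)*(∑ pk ∈ G, (1/((pk.1:ℝ)^pk.2))) + (G.card : ℝ) * (M':ℝ) := by
                rw [Finset.sum_add_distrib, ← Finset.mul_sum, Finset.sum_const, nsmul_eq_mul]
            _ ≤ D*(N:ℝ)*(2/8) + (((f:ℝ)+1)^2)*(M':ℝ) := by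
                have hDN : (0:ℝ) ≤ D*(N:ℝ) := by positivity
                have h3 := mul_le_mul_of_nonneg_left hsum1 hDN
                nlinarith [hM'R]
        -- large part
        have hbr2 : ∑ pk ∈ FPK.filter (fun pk => ¬ max pk.1 pk.2 ≤ f),
            ((cnt {n | n ∈ EP T ∧ pk.1 ^ pk.2 ∣ n} N : ℕ):ℝ)
            ≤ (N:ℝ)*(D/16) + (N:ℝ)*(D/16) := by
          set G := FPK.filter (fun pk => ¬ max pk.1 pk.2 ≤ f) with hG
          have e2 : ∀ pk ∈ G, ((cnt {n | n ∈ EP T ∧ pk.1 ^ pk.2 ∣ n} N : ℕ):ℝ)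
              ≤ (N:ℝ)*(1/((pk.1:ℝ)^pk.2)) := by
            intro pk hpk
            have hin : pk ∈ FPK := (Finset.mem_filter.1 hpk).1
            have := hcrude (pk.1^pk.2) (hppos pk hin)
            calc ((cnt {n | n ∈ EP T ∧ pk.1 ^ pk.2 ∣ n} N : ℕ):ℝ)
                ≤ (N:ℝ) * (1/((pk.1^pk.2 : ℕ):ℝ)) := this
              _ = (N:ℝ)*(1/((pk.1:ℝ)^pk.2)) := by push_cast; ring
          have hsum2 : ∑ pk ∈ G, (1/((pk.1:ℝ)^pk.2)) ≤ D/16 + D/16 := by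
            rw [← Finset.sum_filter_add_sum_filter_not G (fun pk => pk.2 = 1)
              (fun pk => (1/((pk.1:ℝ)^pk.2)))]
            have hq1 : ∑ pk ∈ G.filter (fun pk => pk.2 = 1), (1/((pk.1:ℝ)^pk.2)) ≤ D/16 := by
              have he : ∑ pk ∈ G.filter (fun pk => pk.2 = 1), (1/((pk.1:ℝ)^pk.2))
                  = ∑ pk ∈ G.filter (fun pk => pk.2 = 1), w1 pk.1 := by
                refine Finset.sum_congr rfl (fun pk hpk => ?_)
                have hin : pk ∈ FPK := (Finset.mem_filter.1 (Finset.mem_filter.1 hpk).1).1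
                have hk1 : pk.2 = 1 := (Finset.mem_filter.1 hpk).2
                obtain ⟨-, -, hpP, hkK, -⟩ := hmemfacts pk hin
                rw [hk1] at hkK ⊢
                rw [hw1P pk.1 hpP hkK, pow_one]
              rw [he]
              rw [show ∑ pk ∈ G.filter (fun pk => pk.2 = 1), w1 pk.1
                  = ∑ p ∈ (G.filter (fun pk => pk.2 = 1)).image Prod.fst, w1 p by
                rw [Finset.sum_image]
                intro x hx y hy hxy
                exact Prod.ext hxy (((Finset.mem_filter.1 hx).2).trans ((Finset.mem_filter.1 hy).2).symm)]
              refine hs₁' _ (fun p hpF => ?_)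
              obtain ⟨pk, hpk, rfl⟩ := Finset.mem_image.1 hpF
              have hnotle : ¬ max pk.1 pk.2 ≤ f := (Finset.mem_filter.1 (Finset.mem_filter.1 hpk).1).2
              have hk1 : pk.2 = 1 := (Finset.mem_filter.1 hpk).2
              have hfp : f < pk.1 := by
                rw [hk1] at hnotle
                have hT1f : 1 ≤ f := le_trans hT1 hTf
                omega
              intro hmem
              have : pk.1 ≤ s₁'.sup _root_.id := Finset.le_sup (f := _root_.id) hmem
              omega
            have hq2 : ∑ pk ∈ G.filter (fun pk => ¬ pk.2 = 1), (1/((pk.1:ℝ)^pk.2)) ≤ D/16 := by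
              have he : ∑ pk ∈ G.filter (fun pk => ¬ pk.2 = 1), (1/((pk.1:ℝ)^pk.2))
                  = ∑ pk ∈ G.filter (fun pk => ¬ pk.2 = 1), w2 pk := by
                refine Finset.sum_congr rfl (fun pk hpk => ?_)
                have hin : pk ∈ FPK := (Finset.mem_filter.1 (Finset.mem_filter.1 hpk).1).1
                obtain ⟨hp2, hk1, -, -, -⟩ := hmemfacts pk hin
                have hk2 : 2 ≤ pk.2 := by
                  have := (Finset.mem_filter.1 hpk).2
                  omega
                have hw2v : w2 pk = ((pk.1:ℝ)^pk.2)⁻¹ := by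
                  simp only [hw2def]
                  exact if_pos ⟨hp2, hk2⟩
                rw [hw2v, one_div]
              rw [he]
              refine hs₂' _ (fun pk hpF => ?_)
              have hnotle : ¬ max pk.1 pk.2 ≤ f := (Finset.mem_filter.1 (Finset.mem_filter.1 hpF).1).2
              intro hmem
              have : max pk.1 pk.2 ≤ s₂'.sup (fun pk => max pk.1 pk.2) :=
                Finset.le_sup (f := fun pk : ℕ × ℕ => max pk.1 pk.2) hmem
              omega
            linarith
          calc ∑ pk ∈ G, ((cnt {n | n ∈ EP T ∧ pk.1 ^ pk.2 ∣ n} N : ℕ):ℝ)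
              ≤ ∑ pk ∈ G, (N:ℝ)*(1/((pk.1:ℝ)^pk.2)) := Finset.sum_le_sum e2
            _ = (N:ℝ) * ∑ pk ∈ G, (1/((pk.1:ℝ)^pk.2)) := by rw [Finset.mul_sum]
            _ ≤ (N:ℝ)*(D/16) + (N:ℝ)*(D/16) := by
                have hN0 : (0:ℝ) ≤ (N:ℝ) := by positivity
                have := mul_le_mul_of_nonneg_left hsum2 hN0
                linarith
        linarith
      -- combine
      have hE1 := hEb N
      rw [abs_le] at hE1
      have hlow : D*(N:ℝ) - M' ≤ (cnt (EP T) N : ℝ) := by linarith [hE1.1]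
      have hsplitR : (cnt (EP T) N : ℝ) ≤ (cnt (Sv A P K) N : ℝ) + ((cnt BadE1 N : ℝ) + (cnt BadE2 N : ℝ)) := by
        exact_mod_cast hsplit
      rw [hCstdef]
      nlinarith [hb1, hb2, hlow, hsplitR, hM'R.le]
    -- conclude
    have hCst0 : 0 ≤ Cst := by
      rw [hCstdef]
      positivity
    have hev : ∀ᶠ N in Filter.atTop, D/4 ≤ g N := by
      have htend := tendsto_const_div_atTop_nhds_zero_nat Cst
      rw [Metric.tendsto_atTop] at htend
      obtain ⟨N₁, hN₁⟩ := htend (D*(3/16)) (by positivity)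
      rw [Filter.eventually_atTop]
      refine ⟨max N₁ 1, fun N hN => ?_⟩
      have h1N : 1 ≤ N := le_trans (le_max_right _ _) hN
      have hNR : (0:ℝ) < (N:ℝ) := by exact_mod_cast h1N
      have h2 := hN₁ N (le_trans (le_max_left _ _) hN)
      rw [Real.dist_eq, sub_zero, abs_of_nonneg (by positivity)] at h2
      have h2' : Cst < D*(3/16)*(N:ℝ) := by
        rw [div_lt_iff₀ hNR] at h2
        linarith
      have h3 := key N h1N
      simp only [hg]
      rw [le_div_iff₀ hNR]
      nlinarith
    have hd4 : D/4 ≤ d := ge_of_tendsto hd hev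
    linarith
end

section
/- If ν is a multiplicative arithmetic function, then the support supp(ν) = {n : ν(n) ≠ 0} has an asymptotic density, given by ∏_p (1 - 1/p) · ∑_{k≥0, p^k ∈ supp(ν)} 1/p^k. -/
open Filter Topology ArithmeticFunction

namespace SuppDensity

open Finset
open scoped ArithmeticFunction.Moebius ArithmeticFunction.zeta

lemma cnt_eq_card_filter (A : Set ℕ) [DecidablePred (· ∈ A)] (N : ℕ) :
    cnt A N = ((Finset.Icc 1 N).filter (· ∈ A)).card := by
  rw [cnt, ← Set.ncard_coe_finset]
  congr 1
  ext n
  simp only [Finset.coe_filter, Finset.mem_Icc, Set.mem_inter_iff, Set.mem_Icc,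
    Set.mem_setOf_eq]
  tauto

lemma swap_sum (g : ℕ → ℝ) (N : ℕ) :
    ∑ n ∈ Finset.Icc 1 N, ∑ d ∈ n.divisors, g d
      = ∑ d ∈ Finset.Icc 1 N, g d * (N / d : ℕ) := by
  induction N with
  | zero => simp
  | succ N ih =>
    have hdiv : (N+1).divisors = (Finset.Icc 1 (N+1)).filter (· ∣ (N+1)) := by
      ext d
      simp only [Nat.mem_divisors, Finset.mem_filter, Finset.mem_Icc]
      constructor
      · rintro ⟨h, -⟩
        exact ⟨⟨Nat.pos_of_dvd_of_pos h N.succ_pos, Nat.le_of_dvd N.succ_pos h⟩, h⟩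
      · rintro ⟨-, h⟩
        exact ⟨h, N.succ_ne_zero⟩
    rw [Finset.sum_Icc_succ_top (by omega), ih, Finset.sum_Icc_succ_top (by omega : 1 ≤ N+1),
      hdiv, Finset.sum_filter]
    simp only [Nat.succ_div, Nat.cast_add, Nat.cast_ite, Nat.cast_one, Nat.cast_zero,
      mul_add, mul_ite, mul_one, mul_zero, Finset.sum_add_distrib]
    have h0 : N / (N+1) = 0 := Nat.div_eq_of_lt (by omega)
    simp only [h0]
    rw [Finset.sum_Icc_succ_top (show (1:ℕ) ≤ N+1 by omega), if_pos dvd_rfl]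
    push_cast
    ring


lemma ratio_le (N d : ℕ) (hd : 1 ≤ d) (hN : 1 ≤ N) :
    ((N / d : ℕ) : ℝ) / N ≤ 1 / d := by
  have hN0 : (0:ℝ) < N := by exact_mod_cast hN
  have hd0 : (0:ℝ) < d := by exact_mod_cast hd
  rw [div_le_div_iff₀ hN0 hd0]
  calc ((N / d : ℕ) : ℝ) * d ≤ ((N : ℝ) / d) * d := by
        exact mul_le_mul_of_nonneg_right Nat.cast_div_le hd0.le
    _ = N := by field_simp
    _ = 1 * N := (one_mul _).symm

lemma ratio_ge (N d : ℕ) (hd : 1 ≤ d) (hN : 1 ≤ N) :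
    1 / (d:ℝ) - 1 / N ≤ ((N / d : ℕ) : ℝ) / N := by
  have hN0 : (0:ℝ) < N := by exact_mod_cast hN
  have hd0 : (0:ℝ) < d := by exact_mod_cast hd
  have key : (N : ℝ) < d * ((N / d : ℕ) : ℝ) + d := by
    have h1 : N < d * (N / d) + d := by
      have := Nat.div_add_mod N d
      have := Nat.mod_lt N (show 0 < d by omega)
      omega
    exact_mod_cast h1
  have h2 : (N:ℝ)/d - 1 ≤ ((N / d : ℕ) : ℝ) := by
    rw [sub_le_iff_le_add, div_le_iff₀ hd0]
    nlinarith [key]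
  calc 1/(d:ℝ) - 1/N = ((N:ℝ)/d - 1)/N := by field_simp
    _ ≤ ((N / d : ℕ) : ℝ)/N := by gcongr

lemma tendsto_ratio (d : ℕ) (hd : 1 ≤ d) :
    Tendsto (fun N : ℕ => ((N / d : ℕ) : ℝ) / N) atTop (𝓝 (1 / d)) := by
  have hlow : Tendsto (fun N : ℕ => 1 / (d:ℝ) - 1 / N) atTop (𝓝 (1 / d)) := by
    have := tendsto_one_div_atTop_nhds_zero_nat (𝕜 := ℝ)
    have h := tendsto_const_nhds (x := (1 / (d:ℝ))) (f := atTop (α := ℕ))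
    simpa using h.sub this
  refine tendsto_of_tendsto_of_tendsto_of_le_of_le' hlow tendsto_const_nhds ?_ ?_
  · filter_upwards [eventually_ge_atTop 1] with N hN using ratio_ge N d hd hN
  · filter_upwards [eventually_ge_atTop 1] with N hN using ratio_le N d hd hN

/-- auxiliary kernel for the averaged sums -/
noncomputable def avgf (g : ℕ → ℝ) (N d : ℕ) : ℝ :=
  if d ∈ Finset.Icc 1 N then g d * ((N / d : ℕ) : ℝ) / N else 0

lemma avgf_def (g : ℕ → ℝ) (N d : ℕ) :
    avgf g N d = if d ∈ Finset.Icc 1 N then g d * ((N / d : ℕ) : ℝ) / N else 0 := rfl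

lemma tendsto_avg (g : ℕ → ℝ) (hsum : Summable (fun d : ℕ => ‖g d / d‖)) :
    Tendsto (fun N : ℕ => (∑ d ∈ Finset.Icc 1 N, g d * (N / d : ℕ)) / N) atTop
      (𝓝 (∑' d : ℕ, g d / d)) := by
  have key : Tendsto (fun N : ℕ => ∑' d : ℕ, avgf g N d) atTop (𝓝 (∑' d : ℕ, g d / d)) := by
    apply tendsto_tsum_of_dominated_convergence hsum
    · intro d
      rcases Nat.eq_zero_or_pos d with rfl | hd
      · have : ∀ N : ℕ, avgf g N 0 = 0 := fun N => by simp [avgf_def]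
        simp only [this, Nat.cast_zero, div_zero]
        exact tendsto_const_nhds
      · have h1 : Tendsto (fun N : ℕ => g d * (((N / d : ℕ) : ℝ) / N)) atTop
            (𝓝 (g d * (1 / d))) := (tendsto_ratio d hd).const_mul (g d)
        have h2 : g d * (1 / d) = g d / d := by ring
        rw [← h2]
        apply h1.congr'
        filter_upwards [eventually_ge_atTop d] with N hN
        rw [avgf_def, if_pos (Finset.mem_Icc.mpr ⟨hd, hN⟩), mul_div_assoc]
    · filter_upwards [eventually_ge_atTop 1] with N hN d
      rw [avgf_def]
      by_cases h : d ∈ Finset.Icc 1 N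
      · rw [if_pos h]
        simp only [Finset.mem_Icc] at h
        calc ‖g d * ((N / d : ℕ):ℝ) / N‖ = ‖g d‖ * (((N / d : ℕ):ℝ) / N) := by
              rw [norm_div, norm_mul, Real.norm_natCast, Real.norm_natCast, mul_div_assoc]
          _ ≤ ‖g d‖ * (1 / d) := by
              exact mul_le_mul_of_nonneg_left (ratio_le N d h.1 (h.1.trans h.2)) (norm_nonneg _)
          _ = ‖g d / d‖ := by
              rw [norm_div, Real.norm_natCast, mul_one_div]
      · rw [if_neg h, norm_zero]
        positivity
  refine key.congr (fun N => ?_)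
  rw [tsum_eq_sum (s := Finset.Icc 1 N) (fun d hd => by rw [avgf_def, if_neg hd])]
  rw [Finset.sum_div]
  exact Finset.sum_congr rfl fun d hd => by rw [avgf_def, if_pos hd]


lemma zeta_mul_g (F : ArithmeticFunction ℝ) :
    ((ζ : ArithmeticFunction ℕ) : ArithmeticFunction ℝ)
      * (F * ((μ : ArithmeticFunction ℤ) : ArithmeticFunction ℝ)) = F := by
  rw [mul_comm F, ← mul_assoc, coe_zeta_mul_coe_moebius, one_mul]

lemma F_eq_sum_divisors (F : ArithmeticFunction ℝ) (n : ℕ) :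
    F n = ∑ d ∈ n.divisors, (F * ((μ : ArithmeticFunction ℤ) : ArithmeticFunction ℝ)) d := by
  conv_lhs => rw [← zeta_mul_g F]
  exact coe_zeta_mul_apply

lemma hasDensity_of_summable (F : ArithmeticFunction ℝ)
    (h01 : ∀ n, F n = 0 ∨ F n = 1)
    (hsum : Summable (fun d : ℕ =>
      ‖(F * ((μ : ArithmeticFunction ℤ) : ArithmeticFunction ℝ)) d / d‖)) :
    HasDensity {n : ℕ | F n ≠ 0}
      (∑' d : ℕ, (F * ((μ : ArithmeticFunction ℤ) : ArithmeticFunction ℝ)) d / d) := by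
  classical
  set g : ArithmeticFunction ℝ := F * ((μ : ArithmeticFunction ℤ) : ArithmeticFunction ℝ)
    with hg
  have hcnt : ∀ N : ℕ, (cnt {n : ℕ | F n ≠ 0} N : ℝ) = ∑ n ∈ Finset.Icc 1 N, F n := by
    intro N
    rw [cnt_eq_card_filter, Finset.card_filter]
    push_cast
    refine Finset.sum_congr rfl fun n _ => ?_
    rcases h01 n with h | h <;> simp [Set.mem_setOf_eq, h]
  have key := tendsto_avg (fun d => g d) hsum
  refine key.congr fun N => ?_
  rw [← swap_sum, hcnt N]
  congr 1
  exact Finset.sum_congr rfl fun n _ => (F_eq_sum_divisors F n).symm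

lemma F_eq_partial_sum (F : ArithmeticFunction ℝ) {p : ℕ} (hp : p.Prime) (e : ℕ) :
    F (p ^ e) = ∑ j ∈ Finset.range (e+1),
      (F * ((μ : ArithmeticFunction ℤ) : ArithmeticFunction ℝ)) (p ^ j) := by
  rw [F_eq_sum_divisors F (p ^ e), Nat.sum_divisors_prime_pow hp]

lemma g_apply_one (F : ArithmeticFunction ℝ) (hF : F.IsMultiplicative) :
    (F * ((μ : ArithmeticFunction ℤ) : ArithmeticFunction ℝ)) 1 = 1 :=
  (hF.mul isMultiplicative_moebius.intCast).map_one

lemma g_prime_pow_succ (F : ArithmeticFunction ℝ) {p : ℕ} (hp : p.Prime) (e : ℕ) :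
    (F * ((μ : ArithmeticFunction ℤ) : ArithmeticFunction ℝ)) (p ^ (e+1))
      = F (p ^ (e+1)) - F (p ^ e) := by
  have h1 := F_eq_partial_sum F hp (e+1)
  have h2 := F_eq_partial_sum F hp e
  rw [Finset.sum_range_succ (n := e+1)] at h1
  rw [← h2] at h1
  linarith

lemma g_abs_le_one (F : ArithmeticFunction ℝ) (hF : F.IsMultiplicative)
    (h01 : ∀ n, F n = 0 ∨ F n = 1) {p : ℕ} (hp : p.Prime) (e : ℕ) :
    ‖(F * ((μ : ArithmeticFunction ℤ) : ArithmeticFunction ℝ)) (p ^ e)‖ ≤ 1 := by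
  cases e with
  | zero => simp [pow_zero, g_apply_one F hF]
  | succ e =>
    rw [g_prime_pow_succ F hp e]
    rcases h01 (p ^ (e+1)) with h1 | h1 <;> rcases h01 (p ^ e) with h2 | h2 <;>
      simp [h1, h2]

lemma bounded_geom_summable {p : ℕ} (hp : 2 ≤ p) (u : ℕ → ℝ) (hu : ∀ e, ‖u e‖ ≤ 1) :
    Summable (fun e : ℕ => u e * (1 / (p:ℝ))^e) := by
  have hx0 : (0:ℝ) ≤ 1 / (p:ℝ) := by positivity
  have hx1 : 1 / (p:ℝ) < 1 := by
    rw [div_lt_one (by positivity)]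
    exact_mod_cast hp.trans_lt' one_lt_two
  refine Summable.of_norm_bounded (summable_geometric_of_lt_one hx0 hx1) fun e => ?_
  rw [norm_mul, norm_pow, Real.norm_of_nonneg hx0]
  calc ‖u e‖ * (1/(p:ℝ))^e ≤ 1 * (1/(p:ℝ))^e := by
        exact mul_le_mul_of_nonneg_right (hu e) (by positivity)
    _ = (1/(p:ℝ))^e := one_mul _


lemma inv_p_lt_one {p : ℕ} (hp : 2 ≤ p) : 1 / (p:ℝ) < 1 := by
  rw [div_lt_one (by positivity)]
  exact_mod_cast hp.trans_lt' one_lt_two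

lemma gdiv_eq (F : ArithmeticFunction ℝ) {p : ℕ} (hp : p.Prime) (e : ℕ) :
    (F * ((μ : ArithmeticFunction ℤ) : ArithmeticFunction ℝ)) (p ^ e) / ((p ^ e : ℕ) : ℝ)
      = (F * ((μ : ArithmeticFunction ℤ) : ArithmeticFunction ℝ)) (p ^ e)
        * (1 / (p:ℝ)) ^ e := by
  rw [Nat.cast_pow, one_div_pow, mul_one_div]

/-- The local factor at `p` of the Dirichlet series of `F * μ` at `s = 1`. -/
lemma local_sum (F : ArithmeticFunction ℝ) (hF : F.IsMultiplicative)
    (h01 : ∀ n, F n = 0 ∨ F n = 1) {p : ℕ} (hp : p.Prime) :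
    ∑' e : ℕ, (F * ((μ : ArithmeticFunction ℤ) : ArithmeticFunction ℝ)) (p ^ e)
        / ((p ^ e : ℕ) : ℝ)
      = (1 - 1 / (p:ℝ)) * ∑' e : ℕ, F (p ^ e) * (1 / (p:ℝ)) ^ e := by
  set x : ℝ := 1 / (p:ℝ) with hx
  set S : ℕ → ℝ := fun e => F (p ^ e) * x ^ e with hS
  set T : ℕ → ℝ := fun e => if e = 0 then 0 else F (p ^ (e-1)) * x ^ e with hT
  have hFn : ∀ n, ‖F n‖ ≤ 1 := by
    intro n; rcases h01 n with h | h <;> simp [h]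
  have hSsum : Summable S := bounded_geom_summable hp.two_le _ (fun e => hFn _)
  have hTsum : Summable T := by
    have : Summable (fun e : ℕ => (if e = 0 then (0:ℝ) else F (p ^ (e-1))) * x ^ e) :=
      bounded_geom_summable hp.two_le _ (fun e => by
        rcases Nat.eq_zero_or_pos e with rfl | he
        · simp
        · rw [if_neg he.ne']; exact hFn _)
    refine this.congr fun e => ?_
    rcases Nat.eq_zero_or_pos e with rfl | he
    · simp [hT]
    · rw [hT]; simp only [if_neg he.ne']
  have hgs : ∀ e : ℕ,
      (F * ((μ : ArithmeticFunction ℤ) : ArithmeticFunction ℝ)) (p ^ e) * x ^ e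
        = S e - T e := by
    intro e
    cases e with
    | zero => simp [hS, hT, g_apply_one F hF, pow_zero, hF.map_one]
    | succ e =>
      rw [g_prime_pow_succ F hp e]
      simp only [hS, hT, if_neg (Nat.succ_ne_zero e), Nat.add_sub_cancel]
      ring
  have hTsum_eq : ∑' e, T e = x * ∑' e, S e := by
    rw [Summable.tsum_eq_zero_add hTsum]
    simp only [hT, if_pos rfl, zero_add]
    have : ∀ e : ℕ, (if e + 1 = 0 then (0:ℝ) else F (p ^ (e+1-1)) * x ^ (e+1))
        = x * S e := by
      intro e
      rw [if_neg (Nat.succ_ne_zero e), Nat.add_sub_cancel, hS, pow_succ]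
      ring
    rw [tsum_congr this, tsum_mul_left]
  calc ∑' e : ℕ, (F * ((μ : ArithmeticFunction ℤ) : ArithmeticFunction ℝ)) (p ^ e)
        / ((p ^ e : ℕ) : ℝ)
      = ∑' e : ℕ, (S e - T e) := by
        refine tsum_congr fun e => ?_
        rw [gdiv_eq F hp e, hgs e]
    _ = ∑' e, S e - ∑' e, T e := Summable.tsum_sub hSsum hTsum
    _ = (1 - x) * ∑' e, S e := by rw [hTsum_eq]; ring

lemma local_norm_summable (F : ArithmeticFunction ℝ) (hF : F.IsMultiplicative)
    (h01 : ∀ n, F n = 0 ∨ F n = 1) {p : ℕ} (hp : p.Prime) :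
    Summable (fun e : ℕ =>
      ‖(F * ((μ : ArithmeticFunction ℤ) : ArithmeticFunction ℝ)) (p ^ e)
        / ((p ^ e : ℕ) : ℝ)‖) := by
  have : Summable (fun e : ℕ =>
      (F * ((μ : ArithmeticFunction ℤ) : ArithmeticFunction ℝ)) (p ^ e)
        / ((p ^ e : ℕ) : ℝ)) := by
    refine Summable.congr ?_ (fun e => (gdiv_eq F hp e).symm)
    exact bounded_geom_summable hp.two_le _ (fun e => g_abs_le_one F hF h01 hp e)
  -- norm version: compare with geometric directly
  refine Summable.of_nonneg_of_le (fun e => norm_nonneg _) (fun e => ?_)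
    (summable_geometric_of_lt_one (by positivity) (inv_p_lt_one hp.two_le))
  rw [gdiv_eq F hp e, norm_mul, norm_pow, Real.norm_of_nonneg (by positivity : (0:ℝ) ≤ 1/(p:ℝ))]
  calc ‖(F * ((μ : ArithmeticFunction ℤ) : ArithmeticFunction ℝ)) (p ^ e)‖ * (1/(p:ℝ))^e
      ≤ 1 * (1/(p:ℝ))^e :=
        mul_le_mul_of_nonneg_right (g_abs_le_one F hF h01 hp e) (by positivity)
    _ = (1/(p:ℝ))^e := one_mul _


/-- the norm of the Dirichlet series coefficients of `F * μ` -/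
noncomputable def Gn (F : ArithmeticFunction ℝ) : ℕ → ℝ :=
  fun d => ‖(F * ((μ : ArithmeticFunction ℤ) : ArithmeticFunction ℝ)) d / d‖

lemma Gn_zero (F : ArithmeticFunction ℝ) : Gn F 0 = 0 := by
  simp [Gn]

lemma Gn_one (F : ArithmeticFunction ℝ) (hF : F.IsMultiplicative) : Gn F 1 = 1 := by
  simp [Gn, g_apply_one F hF]

lemma Gn_mult (F : ArithmeticFunction ℝ) (hF : F.IsMultiplicative) :
    ∀ {m n : ℕ}, Nat.Coprime m n → Gn F (m * n) = Gn F m * Gn F n := by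
  intro m n hmn
  have hg := (hF.mul isMultiplicative_moebius.intCast).right hmn
  rw [Gn, Gn, Gn, hg, Nat.cast_mul, ← div_mul_div_comm, norm_mul]

lemma Gn_summable_pow (F : ArithmeticFunction ℝ) (hF : F.IsMultiplicative)
    (h01 : ∀ n, F n = 0 ∨ F n = 1) {p : ℕ} (hp : p.Prime) :
    Summable (fun e : ℕ => Gn F (p ^ e)) :=
  local_norm_summable F hF h01 hp

lemma summable_norm_G (F : ArithmeticFunction ℝ) (hF : F.IsMultiplicative)
    (h01 : ∀ n, F n = 0 ∨ F n = 1)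
    (htail : Summable (fun p : Nat.Primes => ∑' e : ℕ, Gn F ((p:ℕ) ^ (e+1)))) :
    Summable (fun d : ℕ => Gn F d) := by
  classical
  set C : ℝ := Real.exp (∑' p : Nat.Primes, ∑' e : ℕ, Gn F ((p:ℕ) ^ (e+1))) with hC
  have hGnn : ∀ d, 0 ≤ Gn F d := fun d => norm_nonneg _
  have htail_nn : ∀ p : Nat.Primes, 0 ≤ ∑' e : ℕ, Gn F ((p:ℕ) ^ (e+1)) :=
    fun p => tsum_nonneg fun e => hGnn _
  have hprod_le : ∀ N : ℕ, ∏ p ∈ N.primesBelow, (∑' e : ℕ, Gn F (p ^ e)) ≤ C := by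
    intro N
    have step1 : ∀ p ∈ N.primesBelow,
        (∑' e : ℕ, Gn F (p ^ e)) ≤ Real.exp (∑' e : ℕ, Gn F (p ^ (e+1))) := by
      intro p hp
      have hpp : p.Prime := Nat.prime_of_mem_primesBelow hp
      have := Summable.tsum_eq_zero_add (Gn_summable_pow F hF h01 hpp)
      rw [this, pow_zero, Gn_one F hF]
      calc 1 + ∑' e : ℕ, Gn F (p ^ (e+1)) = (∑' e : ℕ, Gn F (p ^ (e+1))) + 1 := by ring
        _ ≤ Real.exp (∑' e : ℕ, Gn F (p ^ (e+1))) := Real.add_one_le_exp _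
    calc ∏ p ∈ N.primesBelow, (∑' e : ℕ, Gn F (p ^ e))
        ≤ ∏ p ∈ N.primesBelow, Real.exp (∑' e : ℕ, Gn F (p ^ (e+1))) := by
          refine Finset.prod_le_prod (fun p _ => tsum_nonneg fun e => hGnn _) step1
      _ = Real.exp (∑ p ∈ N.primesBelow, ∑' e : ℕ, Gn F (p ^ (e+1))) := (Real.exp_sum _ _).symm
      _ ≤ C := by
          rw [hC, Real.exp_le_exp]
          have hsub : ∑ q ∈ N.primesBelow.subtype Nat.Prime,
                  ∑' e : ℕ, Gn F ((q:ℕ) ^ (e+1))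
              = ∑ p ∈ N.primesBelow, ∑' e : ℕ, Gn F (p ^ (e+1)) := by
            exact Finset.sum_subtype_of_mem (fun p => ∑' e : ℕ, Gn F (p ^ (e+1)))
              fun p hp => Nat.prime_of_mem_primesBelow hp
          rw [← hsub]
          exact htail.sum_le_tsum (L := SummationFilter.unconditional Nat.Primes) (N.primesBelow.subtype Nat.Prime) (fun q _ => htail_nn q)
  have hpersum : ∀ {p : ℕ}, p.Prime → Summable (fun e : ℕ => ‖Gn F (p ^ e)‖) := by
    intro p hp
    refine (Gn_summable_pow F hF h01 hp).congr fun e => ?_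
    rw [Real.norm_of_nonneg (hGnn _)]
  have hsm := EulerProduct.summable_and_hasSum_smoothNumbers_prod_primesBelow_tsum
    (f := fun d => Gn F d) (Gn_one F hF) (Gn_mult F hF) hpersum
  refine summable_of_sum_range_le (c := C) hGnn fun n => ?_
  have hind : ∀ d ∈ Finset.range n, Gn F d = Set.indicator (Nat.smoothNumbers n) (Gn F) d := by
    intro d hd
    rcases Nat.eq_zero_or_pos d with rfl | hd0
    · rw [Gn_zero, Set.indicator_apply]
      split <;> simp [Gn_zero]
    · rw [Set.indicator_of_mem]
      refine Nat.mem_smoothNumbers.mpr ⟨hd0.ne', fun q hq => ?_⟩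
      have h1 : q ≤ d := Nat.le_of_mem_primeFactorsList hq
      have := Finset.mem_range.mp hd
      omega
  rw [Finset.sum_congr rfl hind]
  have hsummable_ind : Summable (Set.indicator (Nat.smoothNumbers n) (Gn F)) := by
    rw [← summable_subtype_iff_indicator]
    refine ((hsm n).1.congr fun m => ?_)
    exact Real.norm_of_nonneg (hGnn _)
  calc ∑ d ∈ Finset.range n, Set.indicator (Nat.smoothNumbers n) (Gn F) d
      ≤ ∑' d : ℕ, Set.indicator (Nat.smoothNumbers n) (Gn F) d :=
        hsummable_ind.sum_le_tsum _ (fun d _ => Set.indicator_apply_nonneg fun _ => hGnn d)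
    _ = ∑' m : Nat.smoothNumbers n, Gn F m := (_root_.tsum_subtype _ _).symm
    _ = ∏ p ∈ n.primesBelow, ∑' e : ℕ, Gn F (p ^ e) := (hsm n).2.tsum_eq
    _ ≤ C := hprod_le n


/-- local tail weight -/
noncomputable def Wp (F : ArithmeticFunction ℝ) (p : ℕ) : ℝ :=
  ∑' e : ℕ, (1 - F (p ^ e)) * (1 / (p:ℝ)) ^ e

/-- local sum of the indicator -/
noncomputable def locT (F : ArithmeticFunction ℝ) (p : ℕ) : ℝ :=
  ∑' e : ℕ, F (p ^ e) * (1 / (p:ℝ)) ^ e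

/-- local factor of the density -/
noncomputable def locA (F : ArithmeticFunction ℝ) (p : ℕ) : ℝ :=
  (1 - 1/(p:ℝ)) * locT F p

lemma one_sub_F_norm_le (h01 : ∀ n, (F : ArithmeticFunction ℝ) n = 0 ∨ F n = 1) (n : ℕ) :
    ‖1 - F n‖ ≤ 1 := by
  rcases h01 n with h | h <;> simp [h]

lemma F_norm_le (h01 : ∀ n, (F : ArithmeticFunction ℝ) n = 0 ∨ F n = 1) (n : ℕ) :
    ‖F n‖ ≤ 1 := by
  rcases h01 n with h | h <;> simp [h]

lemma Wp_summable (F : ArithmeticFunction ℝ) (h01 : ∀ n, F n = 0 ∨ F n = 1)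
    {p : ℕ} (hp : 2 ≤ p) :
    Summable (fun e : ℕ => (1 - F (p ^ e)) * (1 / (p:ℝ)) ^ e) :=
  bounded_geom_summable hp _ (fun e => one_sub_F_norm_le h01 _)

lemma locT_summable (F : ArithmeticFunction ℝ) (h01 : ∀ n, F n = 0 ∨ F n = 1)
    {p : ℕ} (hp : 2 ≤ p) :
    Summable (fun e : ℕ => F (p ^ e) * (1 / (p:ℝ)) ^ e) :=
  bounded_geom_summable hp _ (fun e => F_norm_le h01 _)

lemma Wp_nonneg (F : ArithmeticFunction ℝ) (h01 : ∀ n, F n = 0 ∨ F n = 1) (p : ℕ) :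
    0 ≤ Wp F p := by
  refine tsum_nonneg fun e => mul_nonneg ?_ (by positivity)
  rcases h01 (p ^ e) with h | h <;> simp [h]

lemma one_sub_locA (F : ArithmeticFunction ℝ) (hF : F.IsMultiplicative)
    (h01 : ∀ n, F n = 0 ∨ F n = 1) {p : ℕ} (hp : 2 ≤ p) :
    1 - locA F p = (1 - 1/(p:ℝ)) * Wp F p := by
  have hx0 : (0:ℝ) ≤ 1/(p:ℝ) := by positivity
  have hx1 : 1/(p:ℝ) < 1 := inv_p_lt_one hp
  have hgeom : ∑' e : ℕ, (1/(p:ℝ))^e = (1 - 1/(p:ℝ))⁻¹ :=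
    tsum_geometric_of_lt_one hx0 hx1
  have hsplit : locT F p + Wp F p = (1 - 1/(p:ℝ))⁻¹ := by
    rw [locT, Wp, ← Summable.tsum_add (locT_summable F h01 hp) (Wp_summable F h01 hp), ← hgeom]
    exact tsum_congr fun e => by ring
  have hne : (1:ℝ) - 1/(p:ℝ) ≠ 0 := by
    have : 1/(p:ℝ) < 1 := hx1
    linarith
  have : (1 - 1/(p:ℝ)) * (locT F p + Wp F p) = 1 := by
    rw [hsplit, mul_inv_cancel₀ hne]
  rw [locA]
  linarith [this]

lemma locA_nonneg (F : ArithmeticFunction ℝ) (h01 : ∀ n, F n = 0 ∨ F n = 1)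
    {p : ℕ} (hp : 2 ≤ p) : 0 ≤ locA F p := by
  have hx1 : 1/(p:ℝ) < 1 := inv_p_lt_one hp
  refine mul_nonneg (by linarith) (tsum_nonneg fun e => mul_nonneg ?_ (by positivity))
  rcases h01 (p ^ e) with h | h <;> simp [h]

lemma locA_le_exp (F : ArithmeticFunction ℝ) (hF : F.IsMultiplicative)
    (h01 : ∀ n, F n = 0 ∨ F n = 1) {p : ℕ} (hp : 2 ≤ p) :
    locA F p ≤ Real.exp (-(1/2) * Wp F p) := by
  have h1 : 1 - locA F p = (1 - 1/(p:ℝ)) * Wp F p := one_sub_locA F hF h01 hp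
  have hW := Wp_nonneg F h01 p
  have hhalf : (1:ℝ)/2 ≤ 1 - 1/(p:ℝ) := by
    have h2 : (2:ℝ) ≤ p := by exact_mod_cast hp
    have hp0 : (0:ℝ) < p := by linarith
    have : 1/(p:ℝ) ≤ 1/2 := by
      rw [div_le_div_iff₀ hp0 (by norm_num)]
      linarith
    linarith
  calc locA F p = (locA F p - 1) + 1 := by ring
    _ ≤ Real.exp (locA F p - 1) := Real.add_one_le_exp _
    _ ≤ Real.exp (-(1/2) * Wp F p) := by
        rw [Real.exp_le_exp]
        have : (1:ℝ)/2 * Wp F p ≤ (1 - 1/(p:ℝ)) * Wp F p :=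
          mul_le_mul_of_nonneg_right hhalf hW
        linarith [h1]

lemma tail_le (F : ArithmeticFunction ℝ) (hF : F.IsMultiplicative)
    (h01 : ∀ n, F n = 0 ∨ F n = 1) {p : ℕ} (hp : p.Prime) :
    ∑' e : ℕ, Gn F (p ^ (e+1)) ≤ 2 * Wp F p := by
  have hx0 : (0:ℝ) ≤ 1/(p:ℝ) := by positivity
  have hx1 : 1/(p:ℝ) ≤ 1 := (inv_p_lt_one hp.two_le).le
  set x : ℝ := 1/(p:ℝ) with hxd
  set B : ℕ → ℝ := fun e => (1 - F (p ^ e)) * x ^ e with hBd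
  set A : ℕ → ℝ := fun e => (1 - F (p ^ (e+1))) * x ^ (e+1) with hAd
  have hB : Summable B := Wp_summable F h01 hp.two_le
  have hA : Summable A := by
    have : Summable (fun e : ℕ => ((1 - F (p ^ (e+1))) * x) * x ^ e) :=
      bounded_geom_summable hp.two_le _ (fun e => by
        rw [norm_mul]
        calc ‖1 - F (p ^ (e+1))‖ * ‖x‖ ≤ 1 * 1 := by
              refine mul_le_mul (one_sub_F_norm_le h01 _) ?_ (norm_nonneg _) zero_le_one
              rw [Real.norm_of_nonneg hx0]; exact hx1
          _ = 1 := one_mul _)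
    refine this.congr fun e => ?_
    rw [hAd]; ring
  have hpt : ∀ e : ℕ, Gn F (p ^ (e+1)) ≤ A e + B e := by
    intro e
    have hnorm : ‖F (p ^ (e+1)) - F (p ^ e)‖ ≤ (1 - F (p ^ (e+1))) + (1 - F (p ^ e)) := by
      rcases h01 (p ^ (e+1)) with h1 | h1 <;> rcases h01 (p ^ e) with h2 | h2 <;>
        simp [h1, h2] <;> norm_num
    have hGe : Gn F (p ^ (e+1)) = ‖F (p ^ (e+1)) - F (p ^ e)‖ * x ^ (e+1) := by
      rw [Gn, gdiv_eq F hp (e+1), g_prime_pow_succ F hp e, norm_mul, norm_pow,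
        Real.norm_of_nonneg hx0]
    rw [hGe]
    calc ‖F (p ^ (e+1)) - F (p ^ e)‖ * x ^ (e+1)
        ≤ ((1 - F (p ^ (e+1))) + (1 - F (p ^ e))) * x ^ (e+1) := by
          exact mul_le_mul_of_nonneg_right hnorm (by positivity)
      _ = A e + (1 - F (p ^ e)) * x ^ (e+1) := by rw [hAd]; ring
      _ ≤ A e + B e := by
          have h2 : (0:ℝ) ≤ 1 - F (p ^ e) := by
            rcases h01 (p ^ e) with h | h <;> simp [h]
          have : (1 - F (p ^ e)) * x ^ (e+1) ≤ (1 - F (p ^ e)) * x ^ e := by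
            refine mul_le_mul_of_nonneg_left ?_ h2
            calc x ^ (e+1) = x ^ e * x := pow_succ x e
              _ ≤ x ^ e * 1 := by
                  refine mul_le_mul_of_nonneg_left hx1 (by positivity)
              _ = x ^ e := mul_one _
          have hBe : B e = (1 - F (p ^ e)) * x ^ e := rfl
          rw [hBe]; linarith
  have hsumA_eq : ∑' e, A e = Wp F p := by
    have h0 : B 0 = 0 := by simp [hBd, hF.map_one]
    rw [Wp, ← hxd, ← hBd, Summable.tsum_eq_zero_add hB, h0, zero_add]
  have hGsum : Summable (fun e : ℕ => Gn F (p ^ (e+1))) :=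
    (Gn_summable_pow F hF h01 hp).comp_injective fun a b h => by omega
  calc ∑' e, Gn F (p ^ (e+1)) ≤ ∑' e, (A e + B e) := by
        refine Summable.tsum_le_tsum hpt hGsum (hA.add hB)
    _ = ∑' e, A e + ∑' e, B e := Summable.tsum_add hA hB
    _ = Wp F p + Wp F p := by rw [hsumA_eq]; rfl
    _ = 2 * Wp F p := by ring

lemma hasProd_local (F : ArithmeticFunction ℝ) (hF : F.IsMultiplicative)
    (h01 : ∀ n, F n = 0 ∨ F n = 1)
    (hsum : Summable (fun d : ℕ => Gn F d)) :
    HasProd (fun p : Nat.Primes => locA F (p:ℕ))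
      (∑' d : ℕ, (F * ((μ : ArithmeticFunction ℤ) : ArithmeticFunction ℝ)) d / d) := by
  have h := EulerProduct.eulerProduct_hasProd
    (f := fun d : ℕ => (F * ((μ : ArithmeticFunction ℤ) : ArithmeticFunction ℝ)) d / d)
    (by simp [g_apply_one F hF])
    (fun {m n} hmn => by
      beta_reduce
      rw [(hF.mul isMultiplicative_moebius.intCast).right hmn, Nat.cast_mul,
        ← div_mul_div_comm])
    hsum
    (by simp)
  have heq : (fun p : Nat.Primes => ∑' e : ℕ,
      (F * ((μ : ArithmeticFunction ℤ) : ArithmeticFunction ℝ)) ((p:ℕ) ^ e)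
        / (((p:ℕ) ^ e : ℕ) : ℝ)) = fun p : Nat.Primes => locA F (p:ℕ) :=
    funext fun p => local_sum F hF h01 p.prop
  rwa [heq] at h


/-- 0-1 indicator of the support of `ν`. -/
noncomputable def ind (ν : ArithmeticFunction ℂ) : ArithmeticFunction ℝ :=
  ⟨fun n => if ν n = 0 then 0 else 1, by simp⟩

lemma ind_apply (ν : ArithmeticFunction ℂ) (n : ℕ) :
    ind ν n = if ν n = 0 then 0 else 1 := rfl

lemma ind_01 (ν : ArithmeticFunction ℂ) : ∀ n, ind ν n = 0 ∨ ind ν n = 1 := by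
  intro n
  rw [ind_apply]
  split <;> simp

lemma ind_mult (ν : ArithmeticFunction ℂ) (hν : ν.IsMultiplicative) :
    (ind ν).IsMultiplicative := by
  refine ⟨?_, ?_⟩
  · rw [ind_apply, if_neg]
    rw [hν.map_one]
    exact one_ne_zero
  · intro m n hmn
    rw [ind_apply, ind_apply, ind_apply, hν.right hmn]
    rcases eq_or_ne (ν m) 0 with h1 | h1 <;> rcases eq_or_ne (ν n) 0 with h2 | h2 <;>
      simp [h1, h2]

lemma ind_support (ν : ArithmeticFunction ℂ) :
    {n : ℕ | ind ν n ≠ 0} = {n : ℕ | ν n ≠ 0} := by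
  ext n
  by_cases h : ν n = 0 <;> simp [ind_apply, h]

lemma ind_locT (ν : ArithmeticFunction ℂ) (p : ℕ) :
    locT (ind ν) p = ∑' k : {k : ℕ // ν (p ^ k) ≠ 0}, 1 / (p:ℝ) ^ (k:ℕ) := by
  calc locT (ind ν) p = ∑' x : ↑{k : ℕ | ν (p ^ k) ≠ 0}, 1/(p:ℝ)^(x:ℕ) := by
        rw [locT, tsum_subtype {k : ℕ | ν (p ^ k) ≠ 0} (fun k => 1 / (p:ℝ) ^ (k:ℕ))]
        refine (tsum_congr fun e => ?_).symm
        rw [Set.indicator_apply]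
        by_cases h : ν (p ^ e) = 0 <;>
          simp [ind_apply, h, Set.mem_setOf_eq, one_div, inv_pow]
    _ = ∑' k : {k : ℕ // ν (p ^ k) ≠ 0}, 1 / (p:ℝ) ^ (k:ℕ) := rfl

/-- truncation of `F` to conditions at primes in `s` -/
noncomputable def trunc (F : ArithmeticFunction ℝ) (s : Finset ℕ) : ArithmeticFunction ℝ :=
  ⟨fun n => if n = 0 then 0 else ∏ p ∈ s, F (p ^ n.factorization p), by simp⟩

lemma trunc_apply (F : ArithmeticFunction ℝ) (s : Finset ℕ) {n : ℕ} (hn : n ≠ 0) :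
    trunc F s n = ∏ p ∈ s, F (p ^ n.factorization p) := by
  show (if n = 0 then 0 else ∏ p ∈ s, F (p ^ n.factorization p)) = _
  rw [if_neg hn]

lemma trunc_01 (F : ArithmeticFunction ℝ) (h01 : ∀ n, F n = 0 ∨ F n = 1) (s : Finset ℕ) :
    ∀ n, trunc F s n = 0 ∨ trunc F s n = 1 := by
  intro n
  rcases eq_or_ne n 0 with rfl | hn
  · left; exact (trunc F s).map_zero
  · rw [trunc_apply F s hn]
    refine Finset.prod_induction _ (fun x => x = 0 ∨ x = 1) ?_ (Or.inr rfl) ?_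
    · rintro a b (rfl | rfl) (rfl | rfl) <;> simp
    · exact fun p _ => h01 _

lemma trunc_one (F : ArithmeticFunction ℝ) (hF : F.IsMultiplicative) (s : Finset ℕ) :
    trunc F s 1 = 1 := by
  rw [trunc_apply F s one_ne_zero]
  simp [Nat.factorization_one, hF.map_one]

lemma trunc_mult (F : ArithmeticFunction ℝ) (hF : F.IsMultiplicative) (s : Finset ℕ) :
    (trunc F s).IsMultiplicative := by
  refine ⟨trunc_one F hF s, ?_⟩
  intro m n hmn
  rcases eq_or_ne m 0 with rfl | hm
  · have hn1 : n = 1 := by simpa using hmn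
    subst hn1
    simp [(trunc F s).map_zero, trunc_one F hF s]
  rcases eq_or_ne n 0 with rfl | hn
  · have hm1 : m = 1 := by simpa using hmn
    subst hm1
    simp [(trunc F s).map_zero, trunc_one F hF s]
  rw [trunc_apply F s (mul_ne_zero hm hn), trunc_apply F s hm, trunc_apply F s hn,
    ← Finset.prod_mul_distrib]
  refine Finset.prod_congr rfl fun p hp => ?_
  have hab : (m*n).factorization p = m.factorization p + n.factorization p := by
    rw [Nat.factorization_mul hm hn]; rfl
  rw [hab]
  rcases Nat.eq_zero_or_pos (m.factorization p) with ha | ha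
  · rw [ha, zero_add, pow_zero, hF.map_one, one_mul]
  · have hb : n.factorization p = 0 := by
      by_contra hb
      have hpp : p.Prime := by
        have : p ∈ m.primeFactors := by
          rw [← Nat.support_factorization]
          exact Finsupp.mem_support_iff.mpr ha.ne'
        exact Nat.prime_of_mem_primeFactors this
      have hdm : p ∣ m := by
        have : p ∈ m.primeFactors := by
          rw [← Nat.support_factorization]
          exact Finsupp.mem_support_iff.mpr ha.ne'
        exact Nat.dvd_of_mem_primeFactors this
      have hdn : p ∣ n := by
        have : p ∈ n.primeFactors := by
          rw [← Nat.support_factorization]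
          exact Finsupp.mem_support_iff.mpr hb
        exact Nat.dvd_of_mem_primeFactors this
      have : p ∣ Nat.gcd m n := Nat.dvd_gcd hdm hdn
      rw [Nat.Coprime.gcd_eq_one hmn] at this
      exact hpp.one_lt.ne' (Nat.dvd_one.mp this)
    rw [hb, add_zero, pow_zero, hF.map_one, mul_one]


lemma trunc_prime_pow (F : ArithmeticFunction ℝ) (hF : F.IsMultiplicative) (s : Finset ℕ)
    {q : ℕ} (hq : q.Prime) (e : ℕ) :
    trunc F s (q ^ e) = if q ∈ s then F (q ^ e) else 1 := by
  rw [trunc_apply F s (pow_ne_zero e hq.pos.ne')]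
  have hfac : (q ^ e).factorization = Finsupp.single q e := hq.factorization_pow
  by_cases hqs : q ∈ s
  · rw [if_pos hqs]
    rw [Finset.prod_eq_single_of_mem q hqs]
    · rw [hfac, Finsupp.single_apply, if_pos rfl]
    · intro p hp hpq
      rw [hfac, Finsupp.single_apply, if_neg (fun h => hpq h.symm), pow_zero, hF.map_one]
  · rw [if_neg hqs]
    refine Finset.prod_eq_one fun p hp => ?_
    rw [hfac, Finsupp.single_apply, if_neg (fun h => hqs (by rw [h]; exact hp)), pow_zero,
      hF.map_one]

lemma trunc_eq_one_of_ne_zero (F : ArithmeticFunction ℝ) (hF : F.IsMultiplicative)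
    (h01 : ∀ n, F n = 0 ∨ F n = 1) (s : Finset ℕ) {n : ℕ} (hn : F n ≠ 0) :
    trunc F s n = 1 := by
  have hn0 : n ≠ 0 := by
    rintro rfl
    exact hn F.map_zero
  rw [trunc_apply F s hn0]
  refine Finset.prod_eq_one fun p hp => ?_
  rcases Nat.eq_zero_or_pos (n.factorization p) with h | h
  · rw [h, pow_zero, hF.map_one]
  · have hprod := ArithmeticFunction.IsMultiplicative.multiplicative_factorization F hF hn0
    rw [hprod, Finsupp.prod] at hn
    have hsup : p ∈ n.factorization.support := Finsupp.mem_support_iff.mpr h.ne'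
    have hne := Finset.prod_ne_zero_iff.mp hn p hsup
    rcases h01 (p ^ n.factorization p) with h' | h'
    · exact absurd h' hne
    · exact h'

lemma trunc_locA_mem (F : ArithmeticFunction ℝ) (hF : F.IsMultiplicative) (s : Finset ℕ)
    {q : ℕ} (hq : q.Prime) (hqs : q ∈ s) :
    locA (trunc F s) q = locA F q := by
  rw [locA, locA, locT, locT]
  congr 1
  refine tsum_congr fun e => ?_
  rw [trunc_prime_pow F hF s hq e, if_pos hqs]

lemma trunc_locA_not_mem (F : ArithmeticFunction ℝ) (hF : F.IsMultiplicative) (s : Finset ℕ)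
    {q : ℕ} (hq : q.Prime) (hqs : q ∉ s) :
    locA (trunc F s) q = 1 := by
  have hx0 : (0:ℝ) ≤ 1/(q:ℝ) := by positivity
  have hx1 : 1/(q:ℝ) < 1 := inv_p_lt_one hq.two_le
  have hT : locT (trunc F s) q = (1 - 1/(q:ℝ))⁻¹ := by
    rw [locT, ← tsum_geometric_of_lt_one hx0 hx1]
    refine tsum_congr fun e => ?_
    rw [trunc_prime_pow F hF s hq e, if_neg hqs, one_mul]
  rw [locA, hT, mul_inv_cancel₀ (by linarith)]

lemma trunc_tail_zero (F : ArithmeticFunction ℝ) (hF : F.IsMultiplicative) (s : Finset ℕ)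
    {p : ℕ} (hp : p.Prime) (hps : p ∉ s) (e : ℕ) :
    Gn (trunc F s) (p ^ (e+1)) = 0 := by
  rw [Gn, g_prime_pow_succ (trunc F s) hp e, trunc_prime_pow F hF s hp (e+1), if_neg hps,
    trunc_prime_pow F hF s hp e, if_neg hps, sub_self, zero_div, norm_zero]

lemma cnt_mono {A B : Set ℕ} (h : A ⊆ B) (N : ℕ) : cnt A N ≤ cnt B N :=
  Set.ncard_le_ncard (Set.inter_subset_inter_left _ h)
    ((Set.finite_Icc 1 N).inter_of_right _)


lemma locA_le_one (F : ArithmeticFunction ℝ) (hF : F.IsMultiplicative)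
    (h01 : ∀ n, F n = 0 ∨ F n = 1) {p : ℕ} (hp : 2 ≤ p) : locA F p ≤ 1 := by
  have h1 := one_sub_locA F hF h01 hp
  have h2 := Wp_nonneg F h01 p
  have hx1 : 1/(p:ℝ) < 1 := inv_p_lt_one hp
  nlinarith

theorem main_aux (F : ArithmeticFunction ℝ) (hF : F.IsMultiplicative)
    (h01 : ∀ n, F n = 0 ∨ F n = 1) :
    HasDensity {n : ℕ | F n ≠ 0} (∏' p : Nat.Primes, locA F (p:ℕ)) := by
  classical
  by_cases hW : Summable (fun p : Nat.Primes => Wp F (p:ℕ))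
  · have htail : Summable (fun p : Nat.Primes => ∑' e : ℕ, Gn F ((p:ℕ) ^ (e+1))) := by
      refine Summable.of_nonneg_of_le (fun p => tsum_nonneg fun e => norm_nonneg _)
        (fun p => tail_le F hF h01 p.prop) (hW.mul_left 2)
    have hsum := summable_norm_G F hF h01 htail
    have hprod := hasProd_local F hF h01 hsum
    rw [hprod.tprod_eq]
    exact hasDensity_of_summable F h01 hsum
  · have hWnn : ∀ p : Nat.Primes, 0 ≤ Wp F (p:ℕ) := fun p => Wp_nonneg F h01 _
    have hbig : ∀ C : ℝ, ∃ s : Finset Nat.Primes, C < ∑ p ∈ s, Wp F (p:ℕ) := by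
      intro C
      by_contra hc
      push_neg at hc
      exact hW (summable_of_sum_le hWnn hc)
    have hprodle : ∀ s : Finset Nat.Primes,
        ∏ p ∈ s, locA F (p:ℕ) ≤ Real.exp (-(1/2) * ∑ p ∈ s, Wp F (p:ℕ)) := by
      intro s
      calc ∏ p ∈ s, locA F (p:ℕ)
          ≤ ∏ p ∈ s, Real.exp (-(1/2) * Wp F (p:ℕ)) :=
            Finset.prod_le_prod (fun p _ => locA_nonneg F h01 p.prop.two_le)
              (fun p _ => locA_le_exp F hF h01 p.prop.two_le)
        _ = Real.exp (∑ p ∈ s, -(1/2) * Wp F (p:ℕ)) := (Real.exp_sum _ _).symm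
        _ = Real.exp (-(1/2) * ∑ p ∈ s, Wp F (p:ℕ)) := by rw [← Finset.mul_sum]
    have hkey : ∀ ε : ℝ, 0 < ε → ∃ s : Finset Nat.Primes,
        ∏ p ∈ s, locA F (p:ℕ) < ε := by
      intro ε hε
      obtain ⟨s, hs⟩ := hbig (-2 * Real.log ε + 1)
      refine ⟨s, lt_of_le_of_lt (hprodle s) ?_⟩
      have hlog : -(1/2) * ∑ p ∈ s, Wp F (p:ℕ) < Real.log ε := by linarith
      calc Real.exp (-(1/2) * ∑ p ∈ s, Wp F (p:ℕ)) < Real.exp (Real.log ε) :=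
            Real.exp_lt_exp.mpr hlog
        _ = ε := Real.exp_log hε
    have hprodmono : ∀ s₀ s : Finset Nat.Primes, s₀ ⊆ s →
        ∏ p ∈ s, locA F (p:ℕ) ≤ ∏ p ∈ s₀, locA F (p:ℕ) := by
      intro s₀ s hsub
      rw [← Finset.prod_sdiff hsub]
      calc (∏ p ∈ s \ s₀, locA F (p:ℕ)) * ∏ p ∈ s₀, locA F (p:ℕ)
          ≤ 1 * ∏ p ∈ s₀, locA F (p:ℕ) := by
            refine mul_le_mul_of_nonneg_right ?_
              (Finset.prod_nonneg fun p _ => locA_nonneg F h01 p.prop.two_le)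
            exact Finset.prod_le_one (fun p _ => locA_nonneg F h01 p.prop.two_le)
              (fun p _ => locA_le_one F hF h01 p.prop.two_le)
        _ = ∏ p ∈ s₀, locA F (p:ℕ) := one_mul _
    have hzero : HasProd (fun p : Nat.Primes => locA F (p:ℕ)) 0 := by
      rw [HasProd, SummationFilter.unconditional_filter, Metric.tendsto_atTop]
      intro ε hε
      obtain ⟨s₀, hs₀⟩ := hkey ε hε
      refine ⟨s₀, fun s hs => ?_⟩
      rw [Real.dist_eq, sub_zero,
        abs_of_nonneg (Finset.prod_nonneg fun p _ => locA_nonneg F h01 p.prop.two_le)]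
      exact lt_of_le_of_lt (hprodmono s₀ s hs) hs₀
    rw [hzero.tprod_eq]
    rw [HasDensity, NormedAddCommGroup.tendsto_nhds_zero]
    intro ε hε
    obtain ⟨s₀, hs₀⟩ := hkey (ε/2) (by linarith)
    set P : Finset ℕ := s₀.image (fun p : Nat.Primes => (p:ℕ)) with hP
    have hmemP : ∀ q : Nat.Primes, (q:ℕ) ∈ P ↔ q ∈ s₀ := by
      intro q
      rw [hP]
      constructor
      · intro h
        obtain ⟨r, hr, hrq⟩ := Finset.mem_image.mp h
        rwa [show r = q from Subtype.ext hrq] at hr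
      · intro h
        exact Finset.mem_image.mpr ⟨q, h, rfl⟩
    have hFPmult := trunc_mult F hF P
    have hFP01 := trunc_01 F h01 P
    have htail0 : Summable
        (fun p : Nat.Primes => ∑' e : ℕ, Gn (trunc F P) ((p:ℕ) ^ (e+1))) := by
      refine summable_of_ne_finset_zero (s := s₀) fun p hp => ?_
      have hnP : (p:ℕ) ∉ P := fun hmem => hp ((hmemP p).mp hmem)
      have hz : ∀ e : ℕ, Gn (trunc F P) ((p:ℕ) ^ (e+1)) = 0 :=
        fun e => trunc_tail_zero F hF P p.prop hnP e
      simp [hz]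
    have hsumP := summable_norm_G (trunc F P) hFPmult hFP01 htail0
    have hdens := hasDensity_of_summable (trunc F P) hFP01 hsumP
    have hprodP := hasProd_local (trunc F P) hFPmult hFP01 hsumP
    have hprodP' : HasProd (fun p : Nat.Primes => locA (trunc F P) (p:ℕ))
        (∏ p ∈ s₀, locA (trunc F P) (p:ℕ)) := by
      refine hasProd_prod_of_ne_finset_one fun p hp => ?_
      exact trunc_locA_not_mem F hF P p.prop (fun hmem => hp ((hmemP p).mp hmem))
    have hval : (∑' d : ℕ,
        (trunc F P * ((μ : ArithmeticFunction ℤ) : ArithmeticFunction ℝ)) d / d)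
        = ∏ p ∈ s₀, locA F (p:ℕ) := by
      rw [hprodP.unique hprodP']
      exact Finset.prod_congr rfl fun p hp =>
        trunc_locA_mem F hF P p.prop ((hmemP p).mpr hp)
    rw [hval] at hdens
    have hev := hdens.eventually_lt_const
      (show ∏ p ∈ s₀, locA F (p:ℕ) < ε by linarith)
    filter_upwards [hev] with N hN
    have hsub : {n : ℕ | F n ≠ 0} ⊆ {n : ℕ | trunc F P n ≠ 0} := by
      intro n hn
      have h1 := trunc_eq_one_of_ne_zero F hF h01 P hn
      simp [Set.mem_setOf_eq, h1]
    have hmono := cnt_mono hsub N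
    rcases Nat.eq_zero_or_pos N with rfl | hN0
    · simpa using hε
    · have hN0' : (0:ℝ) < N := by exact_mod_cast hN0
      rw [Real.norm_eq_abs, abs_of_nonneg (by positivity)]
      calc (cnt {n : ℕ | F n ≠ 0} N : ℝ) / N
          ≤ (cnt {n : ℕ | trunc F P n ≠ 0} N : ℝ) / N := by
            gcongr
        _ < ε := hN

end SuppDensity

theorem support_of_multiplicative_has_density
    (ν : ArithmeticFunction ℂ) (hν : ν.IsMultiplicative) :
    HasDensity {n : ℕ | ν n ≠ 0}
      (∏' p : Nat.Primes,
        (1 - 1 / (p : ℝ)) * ∑' k : {k : ℕ // ν ((p : ℕ) ^ k) ≠ 0}, 1 / (p : ℝ) ^ (k : ℕ)) := by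
  have hmain := SuppDensity.main_aux (SuppDensity.ind ν) (SuppDensity.ind_mult ν hν)
    (SuppDensity.ind_01 ν)
  rw [SuppDensity.ind_support ν] at hmain
  have hfac : (fun p : Nat.Primes =>
      (1 - 1 / (p : ℝ)) * ∑' k : {k : ℕ // ν ((p : ℕ) ^ k) ≠ 0}, 1 / (p : ℝ) ^ (k : ℕ))
      = fun p : Nat.Primes => SuppDensity.locA (SuppDensity.ind ν) (p:ℕ) := by
    funext p
    rw [SuppDensity.locA, SuppDensity.ind_locT ν (p:ℕ)]
  rw [show (∏' p : Nat.Primes,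
      (1 - 1 / (p : ℝ)) * ∑' k : {k : ℕ // ν ((p : ℕ) ^ k) ≠ 0}, 1 / (p : ℝ) ^ (k : ℕ))
      = ∏' p : Nat.Primes, SuppDensity.locA (SuppDensity.ind ν) (p:ℕ) from by rw [hfac]]
  exact hmain
end
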